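/- Let n ∈ ℕ, N = 2^n, let G be the n-fold Kronecker power over 𝔽₂ of the kernel [[1,0],[1,1]], and let ℓ ≥ 2. Suppose i, j, k ∈ {0,…,N−1} satisfy popcount(i) = popcount(j) = ℓ, popcount(k) = 2, and i AND j = i AND k = j AND k = 0. Let C̄ ⊆ 𝔽₂^N be the 𝔽₂-linear span of the rows {g_t : t ∈ {0,…,N−1}, popcount(t) ≥ ℓ+1} together with the vector g_i + g_j + g_k. Then the minimum Hamming weight over nonzero elements of C̄ equals 2^{ℓ+1}: every nonzero c ∈ C̄ has i₁(c) ≥ 2^{ℓ+1}, and some c ∈ C̄ has i₁(c) = 2^{ℓ+1}. -/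

import Mathlib

open Finset

/-- The polar kernel `G₂ = [[1,0],[1,1]]` over `𝔽₂`. -/
def polarKernel : Matrix (Fin 2) (Fin 2) (ZMod 2) := !![1, 0; 1, 1]

/-- The `n`-fold Kronecker power of the polar kernel, an `N × N` matrix over `𝔽₂`
with `N = 2 ^ n`, rows and columns indexed by `0, …, N-1`. -/
def polarG : (n : ℕ) → Matrix (Fin (2 ^ n)) (Fin (2 ^ n)) (ZMod 2)
  | 0 => 1
  | n + 1 =>
    Matrix.reindex (finCongr (by ring)) (finCongr (by ring))
      (Matrix.reindex finProdFinEquiv finProdFinEquiv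
        (Matrix.kroneckerMap (· * ·) polarKernel (polarG n)))

/-- Row `g_t` of the polar matrix, as a vector in `𝔽₂^N`. -/
def row (n : ℕ) (t : Fin (2 ^ n)) : Fin (2 ^ n) → ZMod 2 := fun c => polarG n t c

/-- Hamming weight `i₁(v)`: the number of nonzero coordinates of `v`. -/
def hammingWeight {N : ℕ} (v : Fin N → ZMod 2) : ℕ :=
  (Finset.univ.filter fun c => v c ≠ 0).card

/-- `popcount j`: the number of ones in the binary representation of `j`. -/
def popcount (j : ℕ) : ℕ := (Nat.bits j).count true
open Finset

namespace PolarAux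

abbrev Cube (n : ℕ) := Fin n → Bool

def subm {n : ℕ} (c m : Cube n) : Prop := ∀ i, c i = true → m i = true

instance {n : ℕ} (c m : Cube n) : Decidable (subm c m) := by
  unfold subm; infer_instance

def rowB {n : ℕ} (m : Cube n) : Cube n → ZMod 2 := fun c => if subm c m then 1 else 0

def wtB {n : ℕ} (f : Cube n → ZMod 2) : ℕ := (univ.filter (fun c => f c ≠ 0)).card

def pcB {n : ℕ} (m : Cube n) : ℕ := (univ.filter (fun i => m i = true)).card

def rsum {n : ℕ} (T : Finset (Cube n)) : Cube n → ZMod 2 := ∑ t ∈ T, rowB t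

lemma subm_refl {n : ℕ} (m : Cube n) : subm m m := fun _ h => h

lemma subm_trans {n : ℕ} {a b c : Cube n} (h1 : subm a b) (h2 : subm b c) : subm a c :=
  fun i hi => h2 i (h1 i hi)

lemma pcB_mono {n : ℕ} {a b : Cube n} (h : subm a b) : pcB a ≤ pcB b := by
  apply Finset.card_le_card
  intro i hi
  simp only [mem_filter, mem_univ, true_and] at *
  exact h i hi

lemma subm_antisymm {n : ℕ} {a b : Cube n} (h : subm a b) (hpc : pcB b ≤ pcB a) : a = b := by
  have hsub : (univ.filter (fun i => a i = true)) ⊆ (univ.filter (fun i => b i = true)) := by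
    intro i hi; simp only [mem_filter, mem_univ, true_and] at *; exact h i hi
  have : (univ.filter (fun i => a i = true)) = (univ.filter (fun i => b i = true)) :=
    Finset.eq_of_subset_of_card_le hsub hpc
  funext i
  have := Finset.ext_iff.1 this i
  simp only [mem_filter, mem_univ, true_and] at this
  cases ha : a i <;> cases hb : b i <;> simp [ha, hb] at this ⊢
  all_goals tauto

lemma wtB_eq_zero_iff {n : ℕ} (f : Cube n → ZMod 2) : wtB f = 0 ↔ f = 0 := by
  unfold wtB
  rw [Finset.card_eq_zero, Finset.filter_eq_empty_iff]
  constructor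
  · intro h; funext c
    have := h (Finset.mem_univ c)
    simpa using this
  · intro h c _; simp [h]

lemma one_le_wtB {n : ℕ} {f : Cube n → ZMod 2} (h : f ≠ 0) : 1 ≤ wtB f := by
  rcases Nat.eq_zero_or_pos (wtB f) with h0 | h1
  · exact absurd ((wtB_eq_zero_iff f).1 h0) h
  · exact h1

lemma wtB_add_le {n : ℕ} (f g : Cube n → ZMod 2) : wtB (f + g) ≤ wtB f + wtB g := by
  unfold wtB
  calc (univ.filter (fun c => (f + g) c ≠ 0)).card
      ≤ ((univ.filter (fun c => f c ≠ 0)) ∪ (univ.filter (fun c => g c ≠ 0))).card := by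
        apply Finset.card_le_card
        intro c hc
        simp only [mem_filter, mem_univ, true_and, mem_union, Pi.add_apply] at *
        by_contra hcon
        push_neg at hcon
        rw [hcon.1, hcon.2] at hc
        simp at hc
    _ ≤ _ := Finset.card_union_le _ _

lemma wtB_as_sum {n : ℕ} (f : Cube n → ZMod 2) :
    wtB f = ∑ c : Cube n, (if f c ≠ 0 then 1 else 0) := by
  unfold wtB
  rw [Finset.card_filter]

/-- The key quadruple inequality. -/
lemma quad_ineq {n : ℕ} (W a b : Cube n → ZMod 2) :
    wtB a + wtB b + wtB (a + b) ≤ wtB W + wtB (W + a) + wtB (W + b) + wtB (W + a + b) := by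
  simp only [wtB_as_sum]
  rw [← Finset.sum_add_distrib, ← Finset.sum_add_distrib, ← Finset.sum_add_distrib,
    ← Finset.sum_add_distrib, ← Finset.sum_add_distrib]
  apply Finset.sum_le_sum
  intro c _
  simp only [Pi.add_apply]
  have : ∀ w x y : ZMod 2,
      ((if x ≠ 0 then 1 else 0) + (if y ≠ 0 then 1 else 0) + (if x + y ≠ 0 then 1 else 0) : ℕ)
      ≤ (if w ≠ 0 then 1 else 0) + (if w + x ≠ 0 then 1 else 0) + (if w + y ≠ 0 then 1 else 0)
        + (if w + x + y ≠ 0 then 1 else 0) := by decide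
  exact this (W c) (a c) (b c)

lemma rsum_empty {n : ℕ} : rsum (∅ : Finset (Cube n)) = 0 := by simp [rsum]

lemma rsum_add {n : ℕ} (A B : Finset (Cube n)) :
    rsum A + rsum B = rsum (symmDiff A B) := by
  classical
  unfold rsum
  have h1 : ∑ t ∈ A, rowB t + ∑ t ∈ B, rowB t
      = ∑ t ∈ A ∪ B, rowB t + ∑ t ∈ A ∩ B, rowB t := (Finset.sum_union_inter).symm
  have h2 : A ∪ B = (symmDiff A B) ∪ (A ∩ B) := by
    ext x
    simp only [Finset.mem_union, Finset.mem_inter, Finset.mem_symmDiff]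
    tauto
  have h3 : Disjoint (symmDiff A B) (A ∩ B) := by
    rw [Finset.disjoint_left]
    intro x hx hx2
    simp only [Finset.mem_symmDiff, Finset.mem_inter] at hx hx2
    tauto
  rw [h1, h2, Finset.sum_union h3]
  have h4 : ∀ g : Cube n → ZMod 2, g + g = 0 := by
    intro g; funext c; simp only [Pi.add_apply, Pi.zero_apply]
    exact CharTwo.add_self_eq_zero _
  have h5 := h4 (∑ t ∈ A ∩ B, rowB t)
  rw [add_assoc, h5, add_zero]

end PolarAux

namespace PolarAux

def minf {n : ℕ} (a b : Cube n) : Cube n := fun i => a i && b i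

lemma subm_minf_iff {n : ℕ} (c a b : Cube n) : subm c (minf a b) ↔ subm c a ∧ subm c b := by
  constructor
  · intro h
    constructor <;> intro i hi <;> have := h i hi <;>
      simp only [minf, Bool.and_eq_true] at this
    · exact this.1
    · exact this.2
  · rintro ⟨h1, h2⟩ i hi
    simp only [minf, Bool.and_eq_true]
    exact ⟨h1 i hi, h2 i hi⟩

/-- number of submasks of `m` is `2 ^ pcB m`. -/
lemma card_subm {n : ℕ} (m : Cube n) :
    (univ.filter (fun c : Cube n => subm c m)).card = 2 ^ pcB m := by
  classical
  have e : {c : Cube n // subm c m} ≃ ({i : Fin n // m i = true} → Bool) :=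
    { toFun := fun c i => c.1 i.1
      invFun := fun p => ⟨fun i => if h : m i = true then p ⟨i, h⟩ else false, by
        intro i hi
        by_contra hmi
        simp only [Bool.not_eq_true] at hmi
        simp only [hmi] at hi
        simp at hi⟩
      left_inv := by
        rintro ⟨c, hc⟩
        ext i
        by_cases h : m i = true
        · simp [h]
        · simp only [h, dif_neg]
          cases hci : c i
          · rfl
          · exact absurd (hc i hci) h
      right_inv := by
        intro p
        funext i
        simp [i.2] }
  have h1 : (univ.filter (fun c : Cube n => subm c m)).card
      = Fintype.card {c : Cube n // subm c m} := (Fintype.card_subtype _).symm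
  rw [h1, Fintype.card_congr e, Fintype.card_fun, Fintype.card_bool, Fintype.card_subtype]
  rfl

lemma wtB_rowB {n : ℕ} (m : Cube n) : wtB (rowB m) = 2 ^ pcB m := by
  unfold wtB
  rw [← card_subm m]
  congr 1
  apply Finset.filter_congr
  intro c _
  unfold rowB
  by_cases h : subm c m <;> simp [h]

def phi {n : ℕ} (s : Cube n) (f : Cube n → ZMod 2) : ZMod 2 :=
  ∑ c ∈ univ.filter (fun c => subm c s), f c

lemma phi_zero {n : ℕ} (s : Cube n) : phi s (0 : Cube n → ZMod 2) = 0 := by simp [phi]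

lemma cast_two_pow (p : ℕ) : ((2 ^ p : ℕ) : ZMod 2) = if p = 0 then 1 else 0 := by
  cases p with
  | zero => simp
  | succ q =>
    have : ((2 ^ (q+1) : ℕ) : ZMod 2) = (2 : ZMod 2) ^ (q+1) := by push_cast; ring
    rw [this]
    have h2 : (2 : ZMod 2) = 0 := by decide
    simp [h2]

lemma phi_rowB {n : ℕ} (s t : Cube n) :
    phi s (rowB t) = if pcB (minf s t) = 0 then 1 else 0 := by
  unfold phi rowB
  rw [Finset.sum_boole, Finset.filter_filter]
  have : (univ.filter (fun c : Cube n => subm c s ∧ subm c t))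
      = (univ.filter (fun c : Cube n => subm c (minf s t))) := by
    apply Finset.filter_congr
    intro c _
    rw [subm_minf_iff]
  rw [this, card_subm]
  exact_mod_cast cast_two_pow (pcB (minf s t))

lemma phi_rsum {n : ℕ} (s : Cube n) (T : Finset (Cube n)) :
    phi s (rsum T) = ∑ t ∈ T, phi s (rowB t) := by
  unfold phi rsum
  rw [Finset.sum_comm]
  apply Finset.sum_congr rfl
  intro c _
  simp

lemma pcB_minf_eq_zero_iff {n : ℕ} (a b : Cube n) :
    pcB (minf a b) = 0 ↔ ∀ i, ¬(a i = true ∧ b i = true) := by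
  unfold pcB
  rw [Finset.card_eq_zero, Finset.filter_eq_empty_iff]
  constructor
  · intro h i hab
    exact h (mem_univ i) (by simp [minf, hab.1, hab.2])
  · intro h i _
    simp only [minf, Bool.and_eq_true]
    exact h i

def compl {n : ℕ} (m : Cube n) : Cube n := fun i => !(m i)

lemma minf_compl_zero_iff {n : ℕ} (t t0 : Cube n) :
    pcB (minf (compl t0) t) = 0 ↔ subm t t0 := by
  rw [pcB_minf_eq_zero_iff]
  constructor
  · intro h i hi
    by_contra ht0
    exact h i ⟨by simp [compl, Bool.not_eq_true] at *; simp [ht0], hi⟩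
  · intro h i hi
    have := h i hi.2
    simp [compl, this] at hi

lemma rsum_ne_zero {n : ℕ} {T : Finset (Cube n)} (h : T.Nonempty) : rsum T ≠ 0 := by
  classical
  obtain ⟨t0, ht0, hmin⟩ := Finset.exists_min_image T pcB h
  intro hzero
  have hphi : phi (compl t0) (rsum T) = 0 := by rw [hzero]; exact phi_zero _
  rw [phi_rsum] at hphi
  have heval : ∀ t ∈ T, phi (compl t0) (rowB t) = if t = t0 then 1 else 0 := by
    intro t ht
    rw [phi_rowB]
    by_cases hsub : subm t t0
    · have : t = t0 := subm_antisymm hsub (hmin t ht)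
      simp [this, (minf_compl_zero_iff t0 t0).2 (subm_refl t0)]
    · have h1 : ¬ pcB (minf (compl t0) t) = 0 := by
        rw [minf_compl_zero_iff]; exact hsub
      have h2 : t ≠ t0 := by rintro rfl; exact hsub (subm_refl t)
      simp [h1, h2]
  rw [Finset.sum_congr rfl heval] at hphi
  rw [Finset.sum_ite_eq' T t0 (fun _ => (1 : ZMod 2))] at hphi
  simp [ht0] at hphi

lemma wtB_cast {n : ℕ} (f : Cube n → ZMod 2) :
    ((wtB f : ℕ) : ZMod 2) = ∑ c : Cube n, f c := by
  classical
  have h1 : ∑ c : Cube n, f c = ∑ c ∈ univ.filter (fun c => f c ≠ 0), f c := by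
    rw [Finset.sum_filter_of_ne]
    intro c _ h
    exact h
  have h2 : ∀ c ∈ univ.filter (fun c : Cube n => f c ≠ 0), f c = 1 := by
    intro c hc
    simp only [mem_filter] at hc
    have := hc.2
    revert this
    generalize f c = x
    revert x
    decide
  rw [h1, Finset.sum_congr rfl h2]
  simp [wtB]

/-- parity of the weight of an `rsum`. -/
lemma wtB_rsum_parity {n : ℕ} (T : Finset (Cube n)) :
    ((wtB (rsum T) : ℕ) : ZMod 2) = ∑ t ∈ T, (if pcB t = 0 then 1 else 0) := by
  rw [wtB_cast]
  unfold rsum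
  have hsw : ∑ c : Cube n, (∑ t ∈ T, rowB t) c = ∑ t ∈ T, ∑ c : Cube n, rowB t c := by
    simp only [Finset.sum_apply]
    rw [Finset.sum_comm]
  rw [hsw]
  apply Finset.sum_congr rfl
  intro t _
  have : ∑ c : Cube n, rowB t c = ((univ.filter (fun c : Cube n => subm c t)).card : ZMod 2) := by
    unfold rowB
    rw [Finset.sum_boole]
  rw [this, card_subm]
  exact_mod_cast cast_two_pow (pcB t)

end PolarAux

namespace PolarAux

def res {n : ℕ} (b : Fin (n+1)) (e : Bool) (f : Cube (n+1) → ZMod 2) : Cube n → ZMod 2 :=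
  fun c => f (b.insertNth e c)

def rm {n : ℕ} (b : Fin (n+1)) (m : Cube (n+1)) : Cube n := b.removeNth m

lemma rm_bit {n : ℕ} (b : Fin (n+1)) (m : Cube (n+1)) (j : Fin n) :
    rm b m j = m (b.succAbove j) := rfl

lemma subm_insertNth {n : ℕ} (b : Fin (n+1)) (e : Bool) (c : Cube n) (m : Cube (n+1)) :
    subm (b.insertNth e c) m ↔ (e = true → m b = true) ∧ subm c (rm b m) := by
  unfold subm
  rw [Fin.forall_iff_succAbove b]
  constructor
  · rintro ⟨h1, h2⟩
    constructor
    · intro he; apply h1; rw [Fin.insertNth_apply_same]; exact he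
    · intro j hj; have := h2 j; rw [Fin.insertNth_apply_succAbove] at this
      exact this hj
  · rintro ⟨h1, h2⟩
    constructor
    · rw [Fin.insertNth_apply_same]; exact h1
    · intro j; rw [Fin.insertNth_apply_succAbove]; exact h2 j

lemma res_rowB_of_imp {n : ℕ} {b : Fin (n+1)} {e : Bool} {m : Cube (n+1)}
    (h : e = true → m b = true) : res b e (rowB m) = rowB (rm b m) := by
  funext c
  unfold res rowB
  by_cases hc : subm c (rm b m)
  · rw [if_pos ((subm_insertNth b e c m).2 ⟨h, hc⟩), if_pos hc]
  · rw [if_neg, if_neg hc]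
    intro hcon
    exact hc ((subm_insertNth b e c m).1 hcon).2

lemma res_rowB_of_not {n : ℕ} {b : Fin (n+1)} {m : Cube (n+1)}
    (h : m b = false) : res b true (rowB m) = 0 := by
  funext c
  unfold res rowB
  rw [if_neg]
  · rfl
  intro hcon
  obtain ⟨h1, _⟩ := (subm_insertNth b true c m).1 hcon
  rw [h1 rfl] at h
  exact Bool.noConfusion h

lemma res_sum {n : ℕ} (b : Fin (n+1)) (e : Bool) {ι : Type*} (T : Finset ι)
    (F : ι → Cube (n+1) → ZMod 2) :
    res b e (∑ t ∈ T, F t) = ∑ t ∈ T, res b e (F t) := by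
  funext c
  simp [res, Finset.sum_apply]

lemma res_add {n : ℕ} (b : Fin (n+1)) (e : Bool) (f g : Cube (n+1) → ZMod 2) :
    res b e (f + g) = res b e f + res b e g := rfl

lemma res_rsum {n : ℕ} (b : Fin (n+1)) (e : Bool) (T : Finset (Cube (n+1))) :
    res b e (rsum T) = ∑ t ∈ T.filter (fun t => e = true → t b = true), rowB (rm b t) := by
  classical
  unfold rsum
  rw [res_sum]
  rw [← Finset.sum_filter_add_sum_filter_not T (fun t => e = true → t b = true)]
  have h2 : ∑ t ∈ T.filter (fun t => ¬(e = true → t b = true)), res b e (rowB t) = 0 := by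
    apply Finset.sum_eq_zero
    intro t ht
    simp only [mem_filter] at ht
    push_neg at ht
    obtain ⟨_, he, htb⟩ := ht
    subst he
    exact res_rowB_of_not (by simpa using htb)
  rw [h2, add_zero]
  apply Finset.sum_congr rfl
  intro t ht
  simp only [mem_filter] at ht
  exact res_rowB_of_imp ht.2

lemma insertNth_rm_self {n : ℕ} (b : Fin (n+1)) (c : Cube (n+1)) :
    b.insertNth (c b) (rm b c) = c := Fin.insertNth_self_removeNth b c

lemma rm_injOn {n : ℕ} (b : Fin (n+1)) (A : Finset (Cube (n+1))) (β : Bool)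
    (h : ∀ t ∈ A, t b = β) :
    ∀ t1 ∈ A, ∀ t2 ∈ A, rm b t1 = rm b t2 → t1 = t2 := by
  intro t1 h1 t2 h2 heq
  have e1 := insertNth_rm_self b t1
  have e2 := insertNth_rm_self b t2
  rw [← e1, ← e2, h t1 h1, h t2 h2, heq]

lemma sum_rowB_rm_eq {n : ℕ} (b : Fin (n+1)) (A : Finset (Cube (n+1))) (β : Bool)
    (h : ∀ t ∈ A, t b = β) :
    ∑ t ∈ A, rowB (rm b t) = rsum (A.image (rm b)) := by
  unfold rsum
  rw [Finset.sum_image (rm_injOn b A β h)]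

lemma wt_split {n : ℕ} (b : Fin (n+1)) (f : Cube (n+1) → ZMod 2) :
    wtB f = wtB (res b false f) + wtB (res b true f) := by
  classical
  have key : ∀ e : Bool, (univ.filter (fun c : Cube (n+1) => f c ≠ 0 ∧ c b = e)).card
      = wtB (res b e f) := by
    intro e
    unfold wtB
    apply Finset.card_bij' (fun c _ => rm b c) (fun d _ => b.insertNth e d)
    · intro c hc
      simp only [mem_filter, mem_univ, true_and] at hc ⊢
      unfold res
      rw [← hc.2, insertNth_rm_self]
      exact hc.1
    · intro d hd
      simp only [mem_filter, mem_univ, true_and] at hd ⊢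
      refine ⟨hd, ?_⟩
      rw [Fin.insertNth_apply_same]
    · intro c hc
      simp only [mem_filter, mem_univ, true_and] at hc
      rw [← hc.2, insertNth_rm_self]
    · intro d _
      unfold rm
      rw [Fin.removeNth_insertNth]
  rw [← key false, ← key true]
  unfold wtB
  rw [← Finset.card_union_of_disjoint]
  · congr 1
    ext c
    simp only [mem_filter, mem_union, mem_univ, true_and]
    constructor
    · intro hc
      cases hcb : c b
      · left; exact ⟨hc, rfl⟩
      · right; exact ⟨hc, rfl⟩
    · rintro (⟨hc, _⟩ | ⟨hc, _⟩) <;> exact hc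
  · rw [Finset.disjoint_left]
    rintro c hc1 hc2
    simp only [mem_filter] at hc1 hc2
    rw [hc1.2.2] at hc2
    exact Bool.noConfusion hc2.2.2

end PolarAux

namespace PolarAux

lemma pcB_split {n : ℕ} (b : Fin (n+1)) (m : Cube (n+1)) :
    pcB m = (if m b = true then 1 else 0) + pcB (rm b m) := by
  unfold pcB
  rw [Finset.card_filter, Finset.card_filter]
  rw [Fin.sum_univ_succAbove (fun i => if m i = true then 1 else 0) b]
  rfl

lemma pcB_rm_le {n : ℕ} (b : Fin (n+1)) (m : Cube (n+1)) : pcB (rm b m) ≤ pcB m := by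
  rw [pcB_split b m]; omega

lemma pcB_rm_of_false {n : ℕ} {b : Fin (n+1)} {m : Cube (n+1)} (h : m b = false) :
    pcB (rm b m) = pcB m := by
  rw [pcB_split b m, h]; simp

lemma pcB_rm_of_true {n : ℕ} {b : Fin (n+1)} {m : Cube (n+1)} (h : m b = true) :
    pcB (rm b m) + 1 = pcB m := by
  rw [pcB_split b m, h]; simp [Nat.add_comm]

lemma minf_rm {n : ℕ} (b : Fin (n+1)) (a m : Cube (n+1)) :
    minf (rm b a) (rm b m) = rm b (minf a m) := rfl

lemma disj_rm {n : ℕ} (b : Fin (n+1)) {a m : Cube (n+1)} (h : pcB (minf a m) = 0) :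
    pcB (minf (rm b a) (rm b m)) = 0 := by
  rw [minf_rm]
  have := pcB_rm_le b (minf a m)
  omega

/-- Reed–Muller distance bound: a nonempty sum of rows all of popcount `≥ p`
has weight at least `2 ^ p`. -/
theorem S0 : ∀ (n p : ℕ) (T : Finset (Cube n)), T.Nonempty → (∀ t ∈ T, p ≤ pcB t) →
    2 ^ p ≤ wtB (rsum T) := by
  intro n
  induction n with
  | zero =>
    intro p T hne hpc
    obtain ⟨t0, ht0⟩ := hne
    have h0 : pcB t0 = 0 := by
      unfold pcB
      simp
    have hp : p = 0 := by
      have := hpc t0 ht0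
      omega
    subst hp
    simpa using one_le_wtB (rsum_ne_zero ⟨t0, ht0⟩)
  | succ m IH =>
    intro p T hne hpc
    rcases p with _ | q
    · simpa using one_le_wtB (rsum_ne_zero hne)
    set b : Fin (m+1) := 0 with hb
    classical
    set A1 := T.filter (fun t => t b = true) with hA1
    set A0 := T.filter (fun t => t b = false) with hA0
    have hres1 : res b true (rsum T) = rsum (A1.image (rm b)) := by
      rw [res_rsum]
      have : T.filter (fun t => true = true → t b = true) = A1 := by
        apply Finset.filter_congr; intro t _; simp
      rw [this]
      exact sum_rowB_rm_eq b A1 true (fun t ht => (Finset.mem_filter.1 ht).2)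
    have hres0 : res b false (rsum T) = rsum (A1.image (rm b)) + rsum (A0.image (rm b)) := by
      rw [res_rsum]
      have : T.filter (fun t => false = true → t b = true) = T := by
        apply Finset.filter_true_of_mem; intro t _; simp
      rw [this]
      rw [← Finset.sum_filter_add_sum_filter_not T (fun t => t b = true)]
      rw [sum_rowB_rm_eq b A1 true (fun t ht => (Finset.mem_filter.1 ht).2)]
      have hA0' : T.filter (fun t => ¬ t b = true) = A0 := by
        apply Finset.filter_congr; intro t _; simp
      rw [hA0', sum_rowB_rm_eq b A0 false (fun t ht => by
        have := (Finset.mem_filter.1 ht).2; exact this)]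
    have hsplit := wt_split b (rsum T)
    by_cases hA0e : A0 = ∅
    · -- every t has bit b, halves are equal
      have hres0' : res b false (rsum T) = rsum (A1.image (rm b)) := by
        rw [hres0, hA0e]
        simp [rsum_empty]
      have hA1ne : A1.Nonempty := by
        obtain ⟨t0, ht0⟩ := hne
        refine ⟨t0, ?_⟩
        rw [hA1, Finset.mem_filter]
        refine ⟨ht0, ?_⟩
        by_contra hcon
        have : t0 ∈ A0 := by
          rw [hA0, Finset.mem_filter]
          exact ⟨ht0, by simpa using hcon⟩
        rw [hA0e] at this
        exact absurd this (Finset.notMem_empty t0)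
      have himg : (A1.image (rm b)).Nonempty := hA1ne.image _
      have hpc1 : ∀ t' ∈ A1.image (rm b), q ≤ pcB t' := by
        intro t' ht'
        obtain ⟨t, ht, rfl⟩ := Finset.mem_image.1 ht'
        have h1 := (Finset.mem_filter.1 ht).2
        have h2 := hpc t (Finset.mem_filter.1 ht).1
        have := pcB_rm_of_true h1
        omega
      have := IH q (A1.image (rm b)) himg hpc1
      rw [hsplit, hres1, hres0']
      have : 2 ^ (q+1) = 2^q + 2^q := by ring
      omega
    · -- A0 nonempty : use res0 + res1
      have hA0ne : A0.Nonempty := Finset.nonempty_of_ne_empty hA0e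
      have himg : (A0.image (rm b)).Nonempty := hA0ne.image _
      have hpc0 : ∀ t' ∈ A0.image (rm b), q + 1 ≤ pcB t' := by
        intro t' ht'
        obtain ⟨t, ht, rfl⟩ := Finset.mem_image.1 ht'
        have h1 := (Finset.mem_filter.1 ht).2
        have h2 := hpc t (Finset.mem_filter.1 ht).1
        have := pcB_rm_of_false h1
        omega
      have hIH := IH (q+1) (A0.image (rm b)) himg hpc0
      have hle : wtB (rsum (A0.image (rm b)))
          ≤ wtB (res b false (rsum T)) + wtB (res b true (rsum T)) := by
        rw [hres0, hres1]
        have h6 := wtB_add_le (rsum (A1.image (rm b)) + rsum (A0.image (rm b)))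
          (rsum (A1.image (rm b)))
        have h7 : (rsum (A1.image (rm b)) + rsum (A0.image (rm b))) + rsum (A1.image (rm b))
            = rsum (A0.image (rm b)) := by
          funext c
          simp only [Pi.add_apply]
          have h8 := CharTwo.add_self_eq_zero (rsum (A1.image (rm b)) c)
          calc rsum (A1.image (rm b)) c + rsum (A0.image (rm b)) c + rsum (A1.image (rm b)) c
              = (rsum (A1.image (rm b)) c + rsum (A1.image (rm b)) c)
                + rsum (A0.image (rm b)) c := by ring
            _ = rsum (A0.image (rm b)) c := by rw [h8, zero_add]
        rw [h7] at h6
        exact h6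
      omega

end PolarAux

namespace PolarAux

lemma exists_bit {n : ℕ} {m : Cube n} (h : 1 ≤ pcB m) : ∃ b, m b = true := by
  unfold pcB at h
  have := Finset.card_pos.1 h
  obtain ⟨b, hb⟩ := this
  simp only [mem_filter] at hb
  exact ⟨b, hb.2⟩

lemma disj_bits {n : ℕ} {i j : Cube n} (h : pcB (minf i j) = 0) {b : Fin n}
    (hb : i b = true) : j b = false := by
  rw [pcB_minf_eq_zero_iff] at h
  have := h b
  cases hjb : j b
  · rfl
  · exact absurd ⟨hb, hjb⟩ this

lemma rsum_insert {n : ℕ} {a : Cube n} {S : Finset (Cube n)} (h : a ∉ S) :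
    rsum (insert a S) = rowB a + rsum S := by
  unfold rsum
  rw [Finset.sum_insert h]

lemma res_rowB_false {n : ℕ} (b : Fin (n+1)) (m : Cube (n+1)) :
    res b false (rowB m) = rowB (rm b m) :=
  res_rowB_of_imp (by simp)

/-- generalized restriction of sums of rows. -/
lemma res_sum_rowB {n : ℕ} (b : Fin (n+1)) (e : Bool) {ι : Type*} [DecidableEq ι]
    (A : Finset ι) (g : ι → Cube (n+1)) :
    res b e (∑ t ∈ A, rowB (g t))
      = ∑ t ∈ A.filter (fun t => e = true → (g t) b = true), rowB (rm b (g t)) := by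
  classical
  rw [res_sum]
  rw [← Finset.sum_filter_add_sum_filter_not A (fun t => e = true → (g t) b = true)]
  have h2 : ∑ t ∈ A.filter (fun t => ¬(e = true → (g t) b = true)), res b e (rowB (g t)) = 0 := by
    apply Finset.sum_eq_zero
    intro t ht
    simp only [mem_filter] at ht
    push_neg at ht
    obtain ⟨_, he, htb⟩ := ht
    subst he
    exact res_rowB_of_not (by simpa using htb)
  rw [h2, add_zero]
  apply Finset.sum_congr rfl
  intro t ht
  simp only [mem_filter] at ht
  exact res_rowB_of_imp ht.2

section DoubleRes

variable {m : ℕ} (b' : Fin (m+2)) (b₂ : Fin (m+1))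

/-- the double removal. -/
def rm2 (t : Cube (m+2)) : Cube m := rm b₂ (rm b' t)

lemma rm2_injOn (A : Finset (Cube (m+2))) (β γ : Bool)
    (hA : ∀ t ∈ A, t b' = β ∧ t (b'.succAbove b₂) = γ) :
    ∀ t1 ∈ A, ∀ t2 ∈ A, rm2 b' b₂ t1 = rm2 b' b₂ t2 → t1 = t2 := by
  intro t1 h1 t2 h2 heq
  unfold rm2 at heq
  have hb1 : rm b' t1 = rm b' t2 := by
    have e1 := insertNth_rm_self b₂ (rm b' t1)
    have e2 := insertNth_rm_self b₂ (rm b' t2)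
    rw [← e1, ← e2]
    have : (rm b' t1) b₂ = (rm b' t2) b₂ := by
      rw [rm_bit, rm_bit, (hA t1 h1).2, (hA t2 h2).2]
    rw [this, heq]
  have e1 := insertNth_rm_self b' t1
  have e2 := insertNth_rm_self b' t2
  rw [← e1, ← e2, (hA t1 h1).1, (hA t2 h2).1, hb1]

lemma sum_rowB_rm2_eq (A : Finset (Cube (m+2))) (β γ : Bool)
    (hA : ∀ t ∈ A, t b' = β ∧ t (b'.succAbove b₂) = γ) :
    ∑ t ∈ A, rowB (rm2 b' b₂ t) = rsum (A.image (rm2 b' b₂)) := by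
  unfold rsum
  rw [Finset.sum_image (rm2_injOn b' b₂ A β γ hA)]

lemma pcB_rm2 (t : Cube (m+2)) :
    pcB (rm2 b' b₂ t) + (if t b' = true then 1 else 0)
      + (if t (b'.succAbove b₂) = true then 1 else 0) = pcB t := by
  unfold rm2
  have h1 := pcB_split b₂ (rm b' t)
  have h2 := pcB_split b' t
  rw [rm_bit] at h1
  omega

lemma disj_rm2 {i j : Cube (m+2)} (h : pcB (minf i j) = 0) :
    pcB (minf (rm2 b' b₂ i) (rm2 b' b₂ j)) = 0 := by
  unfold rm2
  exact disj_rm b₂ (disj_rm b' h)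

end DoubleRes

/-- The pair lemma: `wt(g_i + g_j + Σ_{t∈T} g_t) ≥ 2^{ℓ₁} + 2^{ℓ₂} - 2`
when `pc i = ℓ₁ ≤ ℓ₂ = pc j`, `i, j` disjoint, all rows in `T` of popcount `> ℓ₂`. -/
theorem ML : ∀ (ℓ₂ : ℕ), ∀ (n ℓ₁ : ℕ) (i j : Cube n) (T : Finset (Cube n)),
    1 ≤ ℓ₁ → ℓ₁ ≤ ℓ₂ → pcB i = ℓ₁ → pcB j = ℓ₂ → pcB (minf i j) = 0 →
    (∀ t ∈ T, ℓ₂ + 1 ≤ pcB t) →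
    2 ^ ℓ₁ + 2 ^ ℓ₂ ≤ wtB (rowB i + rowB j + rsum T) + 2 := by
  intro ℓ₂
  induction ℓ₂ using Nat.strong_induction_on with
  | _ ℓ₂ IH =>
  intro n ℓ₁ i j T h1 h12 hpci hpcj hdisj hT
  classical
  -- j has a true bit, so n ≥ 1
  obtain ⟨b', hb'⟩ := exists_bit (m := j) (by omega)
  rcases n with _ | m
  · exact Fin.elim0 b'
  rcases Nat.lt_or_ge ℓ₁ ℓ₂ with hlt | hge
  · -- unequal case: single restriction at b' ∈ j
    obtain ⟨l, rfl⟩ : ∃ l, ℓ₂ = l + 1 := ⟨ℓ₂ - 1, by omega⟩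
    have hib' : i b' = false := by
      rw [pcB_minf_eq_zero_iff] at hdisj
      cases hi : i b'
      · rfl
      · exact absurd ⟨hi, hb'⟩ (hdisj b')
    set f := rowB i + rowB j + rsum T with hf
    set T1 := T.filter (fun t => t b' = true) with hT1
    set T0 := T.filter (fun t => ¬ t b' = true) with hT0
    have hres1 : res b' true f = rowB (rm b' j) + ∑ t ∈ T1, rowB (rm b' t) := by
      rw [hf, res_add, res_add, res_rowB_of_not hib', res_rowB_of_imp (fun _ => hb'), res_rsum]
      rw [zero_add]
      congr 1
      apply Finset.sum_congr
      · apply Finset.filter_congr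
        intro t _
        simp
      · intro t _; rfl
    have hres0 : res b' false f
        = rowB (rm b' i) + rowB (rm b' j) + ∑ t ∈ T, rowB (rm b' t) := by
      rw [hf, res_add, res_add, res_rowB_false, res_rowB_false, res_rsum]
      congr 2
      apply Finset.filter_true_of_mem
      intro t _; simp
    -- weight of true-half
    have hw1 : 2 ^ l ≤ wtB (res b' true f) := by
      rw [hres1]
      rw [sum_rowB_rm_eq b' T1 true (fun t ht => (Finset.mem_filter.1 ht).2)]
      have hnotmem : rm b' j ∉ T1.image (rm b') := by
        intro hmem
        obtain ⟨t, ht, heq⟩ := Finset.mem_image.1 hmem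
        have h3 := hT t (Finset.mem_filter.1 ht).1
        have h4 := pcB_rm_of_true (Finset.mem_filter.1 ht).2
        have h5 := pcB_rm_of_true hb'
        rw [heq] at h4
        omega
      rw [← rsum_insert hnotmem]
      apply S0 (m) l _ ⟨rm b' j, Finset.mem_insert_self _ _⟩
      intro t' ht'
      rcases Finset.mem_insert.1 ht' with rfl | ht'
      · have := pcB_rm_of_true hb'; omega
      · obtain ⟨t, ht, rfl⟩ := Finset.mem_image.1 ht'
        have h3 := hT t (Finset.mem_filter.1 ht).1
        have h4 := pcB_rm_of_true (Finset.mem_filter.1 ht).2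
        omega
    -- weight of false-half via IH
    have hw0 : 2 ^ ℓ₁ + 2 ^ l ≤ wtB (res b' false f) + 2 := by
      rw [hres0]
      have hsum : ∑ t ∈ T, rowB (rm b' t)
          = ∑ t ∈ T1, rowB (rm b' t) + ∑ t ∈ T0, rowB (rm b' t) := by
        rw [← Finset.sum_filter_add_sum_filter_not T (fun t => t b' = true)]
      rw [hsum, sum_rowB_rm_eq b' T1 true (fun t ht => (Finset.mem_filter.1 ht).2),
        sum_rowB_rm_eq b' T0 false (fun t ht => by
          have := (Finset.mem_filter.1 ht).2; simpa using this),
        rsum_add]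
      apply IH l (by omega) m ℓ₁ (rm b' i) (rm b' j) _ h1 (by omega)
        (by rw [pcB_rm_of_false hib']; exact hpci)
        (by have := pcB_rm_of_true hb'; omega)
        (disj_rm b' hdisj)
      intro t' ht'
      have ht'' : t' ∈ (T1.image (rm b')) ∨ t' ∈ (T0.image (rm b')) := by
        have := Finset.mem_symmDiff.1 ht'
        tauto
      rcases ht'' with ht'' | ht''
      · obtain ⟨t, ht, rfl⟩ := Finset.mem_image.1 ht''
        have h3 := hT t (Finset.mem_filter.1 ht).1
        have h4 := pcB_rm_of_true (Finset.mem_filter.1 ht).2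
        omega
      · obtain ⟨t, ht, rfl⟩ := Finset.mem_image.1 ht''
        have h3 := hT t (Finset.mem_filter.1 ht).1
        have h4 := pcB_rm_of_false (by
          have := (Finset.mem_filter.1 ht).2; simpa using this)
        omega
    have hsplit := wt_split b' f
    have hpow : 2 ^ (l+1) = 2 ^ l + 2 ^ l := by ring
    omega
  · -- equal case
    have heq : ℓ₁ = ℓ₂ := by omega
    subst heq
    rcases Nat.lt_or_ge ℓ₁ 2 with hsmall | hbig
    · -- ℓ = 1 base case
      have hℓ : ℓ₁ = 1 := by omega
      have hij : i ≠ j := by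
        intro hcon
        rw [hcon] at hdisj
        have : minf j j = j := by funext x; simp [minf]
        rw [this] at hdisj
        omega
      have hiT : i ∉ T := fun hmem => by have := hT i hmem; omega
      have hjT : j ∉ T := fun hmem => by have := hT j hmem; omega
      have hform : rowB i + rowB j + rsum T = rsum (insert i (insert j T)) := by
        rw [rsum_insert (by simp [hij, hiT]), rsum_insert hjT, add_assoc]
      rw [hform, hℓ]
      have := S0 (m+1) 1 (insert i (insert j T)) ⟨i, Finset.mem_insert_self _ _⟩ (by
        intro t ht
        rcases Finset.mem_insert.1 ht with rfl | ht
        · omega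
        rcases Finset.mem_insert.1 ht with rfl | ht
        · omega
        · have := hT t ht; omega)
      omega
    · -- ℓ ≥ 2 : quadrant argument
      obtain ⟨l, rfl⟩ : ∃ l, ℓ₁ = l + 1 := ⟨ℓ₁ - 1, by omega⟩
      obtain ⟨b, hb⟩ := exists_bit (m := i) (by omega)
      have hjbfalse : j b = false := disj_bits hdisj hb
      have hibfalse' : i b' = false := by
        rw [pcB_minf_eq_zero_iff] at hdisj
        cases hi : i b'
        · rfl
        · exact absurd ⟨hi, hb'⟩ (hdisj b')
      have hbne : b ≠ b' := by
        intro hcon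
        rw [hcon] at hb
        rw [hb] at hibfalse'
        exact Bool.noConfusion hibfalse'
      -- i has ≥ 2 bits so m ≥ 1
      rcases m with _ | m'
      · -- Cube 1: pcB i ≤ 1 < 2 contradiction
        exfalso
        have : pcB i ≤ 1 := by
          unfold pcB
          have := Finset.card_filter_le (univ : Finset (Fin 1)) (fun x => i x = true)
          simpa using this
        omega
      obtain ⟨b₂, hb₂⟩ := Fin.exists_succAbove_eq hbne
      -- quadrant setup
      set f := rowB i + rowB j + rsum T with hf
      set CW := T.filter (fun t => t b' = true ∧ t b = true) with hCW
      set CX := T.filter (fun t => ¬ t b' = true ∧ t b = true) with hCX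
      set CY := T.filter (fun t => t b' = true ∧ ¬ t b = true) with hCY
      set CE := T.filter (fun t => ¬ t b' = true ∧ ¬ t b = true) with hCE
      set W := ∑ t ∈ CW, rowB (rm2 b' b₂ t) with hW
      set X := ∑ t ∈ CX, rowB (rm2 b' b₂ t) with hX
      set Y := ∑ t ∈ CY, rowB (rm2 b' b₂ t) with hY
      set E := ∑ t ∈ CE, rowB (rm2 b' b₂ t) with hE
      set ihat := rm2 b' b₂ i with hihat
      set jhat := rm2 b' b₂ j with hjhat
      set x := rowB ihat + X with hx
      set y := rowB jhat + Y with hy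
      have rm2_eq : ∀ t : Cube (m'+2), rm b₂ (rm b' t) = rm2 b' b₂ t := fun _ => rfl
      have hrmj_bit : (rm b' j) b₂ = false := by rw [rm_bit, hb₂]; exact hjbfalse
      have hrmi_bit : (rm b' i) b₂ = true := by rw [rm_bit, hb₂]; exact hb
      have hrmt_bit : ∀ t : Cube (m'+2), (rm b' t) b₂ = t b := by
        intro t; rw [rm_bit, hb₂]
      -- first-level restrictions
      have hres1 : res b' true f = rowB (rm b' j)
          + ∑ t ∈ T.filter (fun t => t b' = true), rowB (rm b' t) := by
        rw [hf, res_add, res_add, res_rowB_of_not hibfalse',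
          res_rowB_of_imp (fun _ => hb'), res_rsum, zero_add]
        congr 1
        apply Finset.sum_congr
        · apply Finset.filter_congr
          intro t _
          simp
        · intro t _; rfl
      have hres0 : res b' false f
          = rowB (rm b' i) + rowB (rm b' j) + ∑ t ∈ T, rowB (rm b' t) := by
        rw [hf, res_add, res_add, res_rowB_false, res_rowB_false, res_rsum]
        congr 2
        apply Finset.filter_true_of_mem
        intro t _; simp
      -- second-level restriction helper
      have hsum_split : ∀ (A : Finset (Cube (m'+2))) (e : Bool),
          res b₂ e (∑ t ∈ A, rowB (rm b' t))
            = ∑ t ∈ A.filter (fun t => e = true → t b = true), rowB (rm2 b' b₂ t) := by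
        intro A e
        rw [res_sum_rowB]
        apply Finset.sum_congr
        · apply Finset.filter_congr
          intro t _
          rw [hrmt_bit t]
        · intro t _; rfl
      -- filter-set identities
      have efilT1 : ∀ A : Finset (Cube (m'+2)), A.filter (fun t => true = true → t b = true)
          = A.filter (fun t => t b = true) := by
        intro A; apply Finset.filter_congr; intro t _; simp
      have efilT0 : ∀ A : Finset (Cube (m'+2)), A.filter (fun t => false = true → t b = true)
          = A := by
        intro A; apply Finset.filter_true_of_mem; intro t _; simp
      have efilW : (T.filter (fun t => t b' = true)).filter (fun t => t b = true) = CW := by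
        rw [Finset.filter_filter, hCW]
      have efilY : (T.filter (fun t => t b' = true)).filter (fun t => ¬ t b = true) = CY := by
        rw [Finset.filter_filter, hCY]
      have efilX : (T.filter (fun t => ¬ t b' = true)).filter (fun t => t b = true) = CX := by
        rw [Finset.filter_filter, hCX]
      have efilE : (T.filter (fun t => ¬ t b' = true)).filter (fun t => ¬ t b = true) = CE := by
        rw [Finset.filter_filter, hCE]
      -- quadrants
      have hq_h1 : res b₂ true (res b' true f) = W := by
        rw [hres1, res_add, res_rowB_of_not hrmj_bit, zero_add, hsum_split, efilT1, efilW, hW]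
      have hq_h0 : res b₂ false (res b' true f) = W + y := by
        rw [hres1, res_add, res_rowB_of_imp (e := false) (by simp), hsum_split, efilT0]
        rw [← Finset.sum_filter_add_sum_filter_not (T.filter (fun t => t b' = true))
          (fun t => t b = true), efilW, efilY, ← hW, ← hY]
        rw [hy, hjhat, rm2_eq]
        abel
      have hq_g1 : res b₂ true (res b' false f) = W + x := by
        rw [hres0, res_add, res_add, res_rowB_of_imp (fun _ => hrmi_bit),
          res_rowB_of_not hrmj_bit, add_zero, hsum_split, efilT1]
        rw [← Finset.sum_filter_add_sum_filter_not (T.filter (fun t => t b = true))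
          (fun t => t b' = true)]
        have efilW' : (T.filter (fun t => t b = true)).filter (fun t => t b' = true) = CW := by
          rw [Finset.filter_filter, hCW]
          apply Finset.filter_congr; intro t _
          constructor
          · intro h; exact ⟨h.2, h.1⟩
          · intro h; exact ⟨h.2, h.1⟩
        have efilX' : (T.filter (fun t => t b = true)).filter (fun t => ¬ t b' = true) = CX := by
          rw [Finset.filter_filter, hCX]
          apply Finset.filter_congr; intro t _
          constructor
          · intro h; exact ⟨h.2, h.1⟩
          · intro h; exact ⟨h.2, h.1⟩
        rw [efilW', efilX', ← hW, ← hX]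
        rw [hx, hihat, rm2_eq]
        abel
      have hq_g0 : res b₂ false (res b' false f) = W + x + y + E := by
        rw [hres0, res_add, res_add, res_rowB_of_imp (e := false) (by simp),
          res_rowB_of_imp (e := false) (by simp), hsum_split, efilT0]
        rw [← Finset.sum_filter_add_sum_filter_not T (fun t => t b' = true),
          ← Finset.sum_filter_add_sum_filter_not (T.filter (fun t => t b' = true))
            (fun t => t b = true),
          ← Finset.sum_filter_add_sum_filter_not (T.filter (fun t => ¬ t b' = true))
            (fun t => t b = true),
          efilW, efilY, efilX, efilE, ← hW, ← hY, ← hX, ← hE]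
        rw [hx, hy, hihat, hjhat, rm2_eq, rm2_eq]
        abel
      -- weights add over quadrants
      have hwt : wtB f = wtB (res b₂ false (res b' false f))
          + wtB (res b₂ true (res b' false f))
          + wtB (res b₂ false (res b' true f))
          + wtB (res b₂ true (res b' true f)) := by
        rw [wt_split b' f, wt_split b₂ (res b' false f), wt_split b₂ (res b' true f)]
        ring
      rw [hq_h1, hq_h0, hq_g1, hq_g0] at hwt
      -- popcount facts
      have hpc_ihat : pcB ihat = l := by
        have h5 := pcB_rm2 b' b₂ i
        rw [hb₂, hibfalse', hb] at h5
        simp at h5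
        rw [hihat]
        omega
      have hpc_jhat : pcB jhat = l := by
        have h5 := pcB_rm2 b' b₂ j
        rw [hb₂, hb', hjbfalse] at h5
        simp at h5
        rw [hjhat]
        omega
      have hpcX : ∀ t ∈ CX, l + 1 ≤ pcB (rm2 b' b₂ t) := by
        intro t ht
        obtain ⟨htT, htb', htb⟩ : t ∈ T ∧ ¬ t b' = true ∧ t b = true := by
          rw [hCX] at ht
          have := Finset.mem_filter.1 ht; tauto
        have h5 := pcB_rm2 b' b₂ t
        rw [hb₂] at h5
        have h6 := hT t htT
        have e1 : (if t b' = true then 1 else 0) = 0 := by simp [htb']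
        have e2 : (if t b = true then 1 else 0) = 1 := by simp [htb]
        omega
      have hpcY : ∀ t ∈ CY, l + 1 ≤ pcB (rm2 b' b₂ t) := by
        intro t ht
        obtain ⟨htT, htb', htb⟩ : t ∈ T ∧ t b' = true ∧ ¬ t b = true := by
          rw [hCY] at ht
          have := Finset.mem_filter.1 ht; tauto
        have h5 := pcB_rm2 b' b₂ t
        rw [hb₂] at h5
        have h6 := hT t htT
        have e1 : (if t b' = true then 1 else 0) = 1 := by simp [htb']
        have e2 : (if t b = true then 1 else 0) = 0 := by simp [htb]
        omega
      -- convert X, Y to rsums over images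
      have hXimg : X = rsum (CX.image (rm2 b' b₂)) := by
        rw [hX]
        apply sum_rowB_rm2_eq b' b₂ CX false true
        intro t ht
        rw [hCX] at ht
        have := Finset.mem_filter.1 ht
        rw [hb₂]
        constructor
        · simpa using this.2.1
        · exact this.2.2
      have hYimg : Y = rsum (CY.image (rm2 b' b₂)) := by
        rw [hY]
        apply sum_rowB_rm2_eq b' b₂ CY true false
        intro t ht
        rw [hCY] at ht
        have := Finset.mem_filter.1 ht
        rw [hb₂]
        constructor
        · exact this.2.1
        · simpa using this.2.2
      by_cases hCEe : CE = ∅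
      · -- coset quadruple case
        have hE0 : E = 0 := by rw [hE, hCEe]; simp
        rw [hE0, add_zero] at hwt
        have hquad := quad_ineq W x y
        have hihat_notmem : ihat ∉ CX.image (rm2 b' b₂) := by
          intro hmem
          obtain ⟨t, ht, heq⟩ := Finset.mem_image.1 hmem
          have := hpcX t ht
          rw [heq] at this
          omega
        have hwx : 2 ^ l ≤ wtB x := by
          rw [hx, hXimg, ← rsum_insert hihat_notmem]
          apply S0 m' l _ ⟨ihat, Finset.mem_insert_self _ _⟩
          intro t' ht'
          rcases Finset.mem_insert.1 ht' with rfl | ht'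
          · omega
          · obtain ⟨t, ht, rfl⟩ := Finset.mem_image.1 ht'
            have := hpcX t ht
            omega
        have hjhat_notmem : jhat ∉ CY.image (rm2 b' b₂) := by
          intro hmem
          obtain ⟨t, ht, heq⟩ := Finset.mem_image.1 hmem
          have := hpcY t ht
          rw [heq] at this
          omega
        have hwy : 2 ^ l ≤ wtB y := by
          rw [hy, hYimg, ← rsum_insert hjhat_notmem]
          apply S0 m' l _ ⟨jhat, Finset.mem_insert_self _ _⟩
          intro t' ht'
          rcases Finset.mem_insert.1 ht' with rfl | ht'
          · omega
          · obtain ⟨t, ht, rfl⟩ := Finset.mem_image.1 ht'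
            have := hpcY t ht
            omega
        have hxy_form : x + y = rowB ihat + rowB jhat
            + rsum (symmDiff (CX.image (rm2 b' b₂)) (CY.image (rm2 b' b₂))) := by
          rw [← rsum_add, hx, hy, hXimg, hYimg]
          abel
        have hwxy : 2 ^ l + 2 ^ l ≤ wtB (x + y) + 2 := by
          rw [hxy_form]
          apply IH l (by omega) m' l ihat jhat _ (by omega) le_rfl hpc_ihat hpc_jhat
            (by rw [hihat, hjhat]; exact disj_rm2 b' b₂ hdisj)
          intro t' ht'
          have ht'' : t' ∈ CX.image (rm2 b' b₂) ∨ t' ∈ CY.image (rm2 b' b₂) := by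
            have := Finset.mem_symmDiff.1 ht'
            tauto
          rcases ht'' with ht'' | ht'' <;>
            obtain ⟨t, ht, rfl⟩ := Finset.mem_image.1 ht''
          · exact hpcX t ht
          · exact hpcY t ht
        have hpow : 2 ^ (l+1) = 2 ^ l + 2 ^ l := by ring
        omega
      · -- E ≠ 0 : large weight
        have hCEne : CE.Nonempty := Finset.nonempty_of_ne_empty hCEe
        have hEimg : E = rsum (CE.image (rm2 b' b₂)) := by
          rw [hE]
          apply sum_rowB_rm2_eq b' b₂ CE false false
          intro t ht
          rw [hCE] at ht
          have := Finset.mem_filter.1 ht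
          rw [hb₂]
          constructor
          · simpa using this.2.1
          · simpa using this.2.2
        have hwE : 2 ^ (l + 2) ≤ wtB E := by
          rw [hEimg]
          apply S0 m' (l+2) _ (hCEne.image _)
          intro t' ht'
          obtain ⟨t, ht, rfl⟩ := Finset.mem_image.1 ht'
          obtain ⟨htT, htb', htb⟩ : t ∈ T ∧ ¬ t b' = true ∧ ¬ t b = true := by
            rw [hCE] at ht
            have := Finset.mem_filter.1 ht; tauto
          have h5 := pcB_rm2 b' b₂ t
          rw [hb₂] at h5
          have h6 := hT t htT
          have e1 : (if t b' = true then 1 else 0) = 0 := by simp [htb']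
          have e2 : (if t b = true then 1 else 0) = 0 := by simp [htb]
          omega
        have hWW : W + W = 0 := by
          funext c; show W c + W c = 0; exact CharTwo.add_self_eq_zero _
        have hyy : y + y = 0 := by
          funext c; show y c + y c = 0; exact CharTwo.add_self_eq_zero _
        have hxx : x + x = 0 := by
          funext c; show x c + x c = 0; exact CharTwo.add_self_eq_zero _
        have hpair1 : (W + x + y + E) + (W + y) = x + E := by
          have hcomb : (W + x + y + E) + (W + y) = (W + W) + (y + y) + (x + E) := by abel
          rw [hcomb, hWW, hyy, zero_add, zero_add]
        have hpair2 : (W + x) + W = x := by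
          have hcomb : (W + x) + W = (W + W) + x := by abel
          rw [hcomb, hWW, zero_add]
        have hb1 : wtB (x + E) ≤ wtB (W + x + y + E) + wtB (W + y) := by
          have hq := wtB_add_le (W + x + y + E) (W + y)
          rw [hpair1] at hq
          exact hq
        have hb2 : wtB x ≤ wtB (W + x) + wtB W := by
          have hq := wtB_add_le (W + x) W
          rw [hpair2] at hq
          exact hq
        have hb3 : wtB E ≤ wtB (x + E) + wtB x := by
          have hform : (x + E) + x = E := by
            have hcomb : (x + E) + x = (x + x) + E := by abel
            rw [hcomb, hxx, zero_add]
          have hq := wtB_add_le (x + E) x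
          rw [hform] at hq
          exact hq
        have hpow : 2 ^ (l+2) = 2 ^ (l+1) + 2 ^ (l+1) := by ring
        omega
end PolarAux

namespace PolarAux

lemma minf_comm {n : ℕ} (a b : Cube n) : minf a b = minf b a := by
  funext i; simp [minf, Bool.and_comm]

lemma disj_bits' {n : ℕ} {i j : Cube n} (h : pcB (minf i j) = 0) {b : Fin n}
    (hb : j b = true) : i b = false := by
  rw [minf_comm] at h
  exact disj_bits h hb

lemma exists_two_bits {n : ℕ} {m : Cube n} (h : 2 ≤ pcB m) :
    ∃ b b' : Fin n, b ≠ b' ∧ m b = true ∧ m b' = true := by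
  unfold pcB at h
  have h1 : 1 < (univ.filter (fun i => m i = true)).card := h
  obtain ⟨a, ha, b, hb, hab⟩ := Finset.one_lt_card.1 h1
  simp only [mem_filter] at ha hb
  exact ⟨a, b, hab, ha.2, hb.2⟩

lemma odd_wtB_pos {n : ℕ} {f : Cube n → ZMod 2} (h : ((wtB f : ℕ) : ZMod 2) = 1) :
    1 ≤ wtB f := by
  rcases Nat.eq_zero_or_pos (wtB f) with h0 | h1
  · rw [h0] at h
    simp at h
  · exact h1

/-- parity of `rsum` over a finset whose unique popcount-0 element is `⊥`. -/
lemma wtB_rsum_odd {n : ℕ} (U : Finset (Cube n)) (z : Cube n) (hz : z ∈ U) (hzpc : pcB z = 0)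
    (hother : ∀ t ∈ U, t ≠ z → 1 ≤ pcB t) : 1 ≤ wtB (rsum U) := by
  apply odd_wtB_pos
  rw [wtB_rsum_parity]
  have : ∀ t ∈ U, (if pcB t = 0 then (1 : ZMod 2) else 0) = if t = z then 1 else 0 := by
    intro t ht
    by_cases htz : t = z
    · subst htz
      simp [hzpc]
    · have := hother t ht htz
      have hne : ¬ pcB t = 0 := by omega
      simp [hne, htz]
  rw [Finset.sum_congr rfl this, Finset.sum_ite_eq' U z (fun _ => (1 : ZMod 2))]
  simp [hz]

set_option maxHeartbeats 2000000 in
/-- The triple lemma: merged row `g_i + g_j + g_k` plus rows of popcount `> ℓ`. -/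
theorem TL (ℓ : ℕ) (hℓ : 2 ≤ ℓ) (n : ℕ) (i j k : Cube n) (T : Finset (Cube n))
    (hpci : pcB i = ℓ) (hpcj : pcB j = ℓ) (hpck : pcB k = 2)
    (hij : pcB (minf i j) = 0) (hik : pcB (minf i k) = 0) (hjk : pcB (minf j k) = 0)
    (hT : ∀ t ∈ T, ℓ + 1 ≤ pcB t) :
    2 ^ (ℓ + 1) ≤ wtB (rowB i + rowB j + rowB k + rsum T) := by
  classical
  obtain ⟨b, b', hbne, hkb, hkb'⟩ := exists_two_bits (m := k) (by omega)
  rcases n with _ | n1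
  · exact Fin.elim0 b
  rcases n1 with _ | m'
  · -- n = 1 : pcB k ≤ 1 contradiction
    exfalso
    have : pcB k ≤ 1 := by
      unfold pcB
      have := Finset.card_filter_le (univ : Finset (Fin 1)) (fun x => k x = true)
      simpa using this
    omega
  obtain ⟨b₂, hb₂⟩ := Fin.exists_succAbove_eq hbne
  have hib : i b = false := disj_bits' hik hkb
  have hib' : i b' = false := disj_bits' hik hkb'
  have hjb : j b = false := disj_bits' hjk hkb
  have hjb' : j b' = false := disj_bits' hjk hkb'
  set f := rowB i + rowB j + rowB k + rsum T with hf
  set CW := T.filter (fun t => t b' = true ∧ t b = true) with hCW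
  set CX := T.filter (fun t => ¬ t b' = true ∧ t b = true) with hCX
  set CY := T.filter (fun t => t b' = true ∧ ¬ t b = true) with hCY
  set CE := T.filter (fun t => ¬ t b' = true ∧ ¬ t b = true) with hCE
  set W := ∑ t ∈ CW, rowB (rm2 b' b₂ t) with hW
  set X := ∑ t ∈ CX, rowB (rm2 b' b₂ t) with hX
  set Y := ∑ t ∈ CY, rowB (rm2 b' b₂ t) with hY
  set E := ∑ t ∈ CE, rowB (rm2 b' b₂ t) with hE
  set ihat := rm2 b' b₂ i with hihat
  set jhat := rm2 b' b₂ j with hjhat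
  set khat := rm2 b' b₂ k with hkhat
  set Wp := rowB khat + W with hWp
  set Ep := rowB ihat + rowB jhat + E with hEp
  have rm2_eq : ∀ t : Cube (m'+2), rm b₂ (rm b' t) = rm2 b' b₂ t := fun _ => rfl
  have hrmi_bit : (rm b' i) b₂ = false := by rw [rm_bit, hb₂]; exact hib
  have hrmj_bit : (rm b' j) b₂ = false := by rw [rm_bit, hb₂]; exact hjb
  have hrmk_bit : (rm b' k) b₂ = true := by rw [rm_bit, hb₂]; exact hkb
  have hrmt_bit : ∀ t : Cube (m'+2), (rm b' t) b₂ = t b := by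
    intro t; rw [rm_bit, hb₂]
  -- first-level restrictions
  have hres1 : res b' true f = rowB (rm b' k)
      + ∑ t ∈ T.filter (fun t => t b' = true), rowB (rm b' t) := by
    rw [hf, res_add, res_add, res_add, res_rowB_of_not hib', res_rowB_of_not hjb',
      res_rowB_of_imp (fun _ => hkb'), res_rsum, zero_add, zero_add]
    congr 1
    apply Finset.sum_congr
    · apply Finset.filter_congr
      intro t _
      simp
    · intro t _; rfl
  have hres0 : res b' false f
      = rowB (rm b' i) + rowB (rm b' j) + rowB (rm b' k) + ∑ t ∈ T, rowB (rm b' t) := by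
    rw [hf, res_add, res_add, res_add, res_rowB_false, res_rowB_false, res_rowB_false, res_rsum]
    congr 1
    apply Finset.sum_congr
    · apply Finset.filter_true_of_mem
      intro t _; simp
    · intro t _; rfl
  -- second-level helper
  have hsum_split : ∀ (A : Finset (Cube (m'+2))) (e : Bool),
      res b₂ e (∑ t ∈ A, rowB (rm b' t))
        = ∑ t ∈ A.filter (fun t => e = true → t b = true), rowB (rm2 b' b₂ t) := by
    intro A e
    rw [res_sum_rowB]
    apply Finset.sum_congr
    · apply Finset.filter_congr
      intro t _
      rw [hrmt_bit t]
    · intro t _; rfl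
  have efilT1 : ∀ A : Finset (Cube (m'+2)), A.filter (fun t => true = true → t b = true)
      = A.filter (fun t => t b = true) := by
    intro A; apply Finset.filter_congr; intro t _; simp
  have efilT0 : ∀ A : Finset (Cube (m'+2)), A.filter (fun t => false = true → t b = true)
      = A := by
    intro A; apply Finset.filter_true_of_mem; intro t _; simp
  have efilW : (T.filter (fun t => t b' = true)).filter (fun t => t b = true) = CW := by
    rw [Finset.filter_filter, hCW]
  have efilY : (T.filter (fun t => t b' = true)).filter (fun t => ¬ t b = true) = CY := by
    rw [Finset.filter_filter, hCY]
  -- quadrants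
  have hq_h1 : res b₂ true (res b' true f) = Wp := by
    rw [hres1, res_add, res_rowB_of_imp (fun _ => hrmk_bit), hsum_split, efilT1, efilW,
      hWp, hkhat, rm2_eq, hW]
  have hq_h0 : res b₂ false (res b' true f) = Wp + Y := by
    rw [hres1, res_add, res_rowB_of_imp (e := false) (by simp), hsum_split, efilT0]
    rw [← Finset.sum_filter_add_sum_filter_not (T.filter (fun t => t b' = true))
      (fun t => t b = true), efilW, efilY, ← hW, ← hY]
    rw [hWp, hkhat, rm2_eq]
    abel
  have hq_g1 : res b₂ true (res b' false f) = Wp + X := by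
    rw [hres0, res_add, res_add, res_add, res_rowB_of_not hrmi_bit,
      res_rowB_of_not hrmj_bit, res_rowB_of_imp (fun _ => hrmk_bit), hsum_split, efilT1]
    rw [← Finset.sum_filter_add_sum_filter_not (T.filter (fun t => t b = true))
      (fun t => t b' = true)]
    have efilW' : (T.filter (fun t => t b = true)).filter (fun t => t b' = true) = CW := by
      rw [Finset.filter_filter, hCW]
      apply Finset.filter_congr; intro t _
      constructor
      · intro h; exact ⟨h.2, h.1⟩
      · intro h; exact ⟨h.2, h.1⟩
    have efilX' : (T.filter (fun t => t b = true)).filter (fun t => ¬ t b' = true) = CX := by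
      rw [Finset.filter_filter, hCX]
      apply Finset.filter_congr; intro t _
      constructor
      · intro h; exact ⟨h.2, h.1⟩
      · intro h; exact ⟨h.2, h.1⟩
    rw [efilW', efilX', ← hW, ← hX]
    rw [hWp, hkhat, rm2_eq]
    abel
  have hq_g0 : res b₂ false (res b' false f) = Wp + X + Y + Ep := by
    rw [hres0, res_add, res_add, res_add, res_rowB_of_imp (e := false) (by simp),
      res_rowB_of_imp (e := false) (by simp), res_rowB_of_imp (e := false) (by simp),
      hsum_split, efilT0]
    rw [← Finset.sum_filter_add_sum_filter_not T (fun t => t b' = true),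
      ← Finset.sum_filter_add_sum_filter_not (T.filter (fun t => t b' = true))
        (fun t => t b = true),
      ← Finset.sum_filter_add_sum_filter_not (T.filter (fun t => ¬ t b' = true))
        (fun t => t b = true)]
    have efilX : (T.filter (fun t => ¬ t b' = true)).filter (fun t => t b = true) = CX := by
      rw [Finset.filter_filter, hCX]
    have efilE : (T.filter (fun t => ¬ t b' = true)).filter (fun t => ¬ t b = true) = CE := by
      rw [Finset.filter_filter, hCE]
    rw [efilW, efilY, efilX, efilE, ← hW, ← hY, ← hX, ← hE]
    rw [hWp, hEp, hihat, hjhat, hkhat, rm2_eq, rm2_eq, rm2_eq]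
    abel
  -- weights add over quadrants
  have hwt : wtB f = wtB (res b₂ false (res b' false f))
      + wtB (res b₂ true (res b' false f))
      + wtB (res b₂ false (res b' true f))
      + wtB (res b₂ true (res b' true f)) := by
    rw [wt_split b' f, wt_split b₂ (res b' false f), wt_split b₂ (res b' true f)]
    ring
  rw [hq_h1, hq_h0, hq_g1, hq_g0] at hwt
  -- popcounts after rm2
  have hpc_ihat : pcB ihat = ℓ := by
    have h5 := pcB_rm2 b' b₂ i
    rw [hb₂, hib, hib'] at h5
    simp at h5
    rw [hihat]
    omega
  have hpc_jhat : pcB jhat = ℓ := by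
    have h5 := pcB_rm2 b' b₂ j
    rw [hb₂, hjb, hjb'] at h5
    simp at h5
    rw [hjhat]
    omega
  have hpc_khat : pcB khat = 0 := by
    have h5 := pcB_rm2 b' b₂ k
    rw [hb₂, hkb, hkb'] at h5
    simp at h5
    rw [hkhat]
    omega
  have hpcW : ∀ t ∈ CW, ℓ - 1 ≤ pcB (rm2 b' b₂ t) ∧ 1 ≤ pcB (rm2 b' b₂ t) := by
    intro t ht
    obtain ⟨htT, htb', htb⟩ : t ∈ T ∧ t b' = true ∧ t b = true := by
      rw [hCW] at ht
      have := Finset.mem_filter.1 ht; tauto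
    have h5 := pcB_rm2 b' b₂ t
    rw [hb₂] at h5
    have h6 := hT t htT
    have e1 : (if t b' = true then 1 else 0) = 1 := by simp [htb']
    have e2 : (if t b = true then 1 else 0) = 1 := by simp [htb]
    omega
  have hpcX : ∀ t ∈ CX, ℓ ≤ pcB (rm2 b' b₂ t) := by
    intro t ht
    obtain ⟨htT, htb', htb⟩ : t ∈ T ∧ ¬ t b' = true ∧ t b = true := by
      rw [hCX] at ht
      have := Finset.mem_filter.1 ht; tauto
    have h5 := pcB_rm2 b' b₂ t
    rw [hb₂] at h5
    have h6 := hT t htT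
    have e1 : (if t b' = true then 1 else 0) = 0 := by simp [htb']
    have e2 : (if t b = true then 1 else 0) = 1 := by simp [htb]
    omega
  have hpcY : ∀ t ∈ CY, ℓ ≤ pcB (rm2 b' b₂ t) := by
    intro t ht
    obtain ⟨htT, htb', htb⟩ : t ∈ T ∧ t b' = true ∧ ¬ t b = true := by
      rw [hCY] at ht
      have := Finset.mem_filter.1 ht; tauto
    have h5 := pcB_rm2 b' b₂ t
    rw [hb₂] at h5
    have h6 := hT t htT
    have e1 : (if t b' = true then 1 else 0) = 1 := by simp [htb']
    have e2 : (if t b = true then 1 else 0) = 0 := by simp [htb]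
    omega
  have hpcE : ∀ t ∈ CE, ℓ + 1 ≤ pcB (rm2 b' b₂ t) := by
    intro t ht
    obtain ⟨htT, htb', htb⟩ : t ∈ T ∧ ¬ t b' = true ∧ ¬ t b = true := by
      rw [hCE] at ht
      have := Finset.mem_filter.1 ht; tauto
    have h5 := pcB_rm2 b' b₂ t
    rw [hb₂] at h5
    have h6 := hT t htT
    have e1 : (if t b' = true then 1 else 0) = 0 := by simp [htb']
    have e2 : (if t b = true then 1 else 0) = 0 := by simp [htb]
    omega
  -- image conversions
  have hWimg : W = rsum (CW.image (rm2 b' b₂)) := by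
    rw [hW]
    apply sum_rowB_rm2_eq b' b₂ CW true true
    intro t ht
    rw [hCW] at ht
    have := Finset.mem_filter.1 ht
    rw [hb₂]
    exact ⟨this.2.1, this.2.2⟩
  have hXimg : X = rsum (CX.image (rm2 b' b₂)) := by
    rw [hX]
    apply sum_rowB_rm2_eq b' b₂ CX false true
    intro t ht
    rw [hCX] at ht
    have := Finset.mem_filter.1 ht
    rw [hb₂]
    exact ⟨by simpa using this.2.1, this.2.2⟩
  have hYimg : Y = rsum (CY.image (rm2 b' b₂)) := by
    rw [hY]
    apply sum_rowB_rm2_eq b' b₂ CY true false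
    intro t ht
    rw [hCY] at ht
    have := Finset.mem_filter.1 ht
    rw [hb₂]
    exact ⟨this.2.1, by simpa using this.2.2⟩
  have hEimg : E = rsum (CE.image (rm2 b' b₂)) := by
    rw [hE]
    apply sum_rowB_rm2_eq b' b₂ CE false false
    intro t ht
    rw [hCE] at ht
    have := Finset.mem_filter.1 ht
    rw [hb₂]
    exact ⟨by simpa using this.2.1, by simpa using this.2.2⟩
  -- ML bound for Ep
  have hEp_bound : 2 ^ ℓ + 2 ^ ℓ ≤ wtB Ep + 2 := by
    rw [hEp, hEimg]
    apply ML ℓ m' ℓ ihat jhat _ (by omega) le_rfl hpc_ihat hpc_jhat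
      (by rw [hihat, hjhat]; exact disj_rm2 b' b₂ hij)
    intro t' ht'
    obtain ⟨t, ht, rfl⟩ := Finset.mem_image.1 ht'
    exact hpcE t ht
  -- oddness of Wp + X and Wp + Y
  have hodd : ∀ (CZ : Finset (Cube (m'+2))) (Z : Cube m' → ZMod 2),
      Z = rsum (CZ.image (rm2 b' b₂)) → (∀ t ∈ CZ, 1 ≤ pcB (rm2 b' b₂ t)) →
      1 ≤ wtB (Wp + Z) := by
    intro CZ Z hZimg hZpc
    have hform : Wp + Z = rsum (insert khat (symmDiff (CW.image (rm2 b' b₂))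
        (CZ.image (rm2 b' b₂)))) := by
      rw [hWp, hWimg, hZimg, add_assoc, rsum_add, rsum_insert]
      intro hmem
      have hmem2 : khat ∈ (CW.image (rm2 b' b₂)) ∨ khat ∈ (CZ.image (rm2 b' b₂)) := by
        have := Finset.mem_symmDiff.1 hmem
        tauto
      rcases hmem2 with hm | hm <;> obtain ⟨t, ht, heq⟩ := Finset.mem_image.1 hm
      · have := (hpcW t ht).2
        rw [heq, hpc_khat] at this
        omega
      · have := hZpc t ht
        rw [heq, hpc_khat] at this
        omega
    rw [hform]
    apply wtB_rsum_odd _ khat (Finset.mem_insert_self _ _) hpc_khat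
    intro t ht htne
    rcases Finset.mem_insert.1 ht with rfl | ht2
    · exact absurd rfl htne
    · have ht3 : t ∈ (CW.image (rm2 b' b₂)) ∨ t ∈ (CZ.image (rm2 b' b₂)) := by
        have := Finset.mem_symmDiff.1 ht2
        tauto
      rcases ht3 with hm | hm <;> obtain ⟨u, hu, rfl⟩ := Finset.mem_image.1 hm
      · exact (hpcW u hu).2
      · exact hZpc u hu
  have hoddX : 1 ≤ wtB (Wp + X) := hodd CX X hXimg (fun t ht => by
    have := hpcX t ht; omega)
  have hoddY : 1 ≤ wtB (Wp + Y) := hodd CY Y hYimg (fun t ht => by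
    have := hpcY t ht; omega)
  -- char-2 cancellation identities
  have hcancel1 : (Wp + X + Y + Ep) + Wp = X + Y + Ep := by
    have hWW : Wp + Wp = 0 := by
      funext c; show Wp c + Wp c = 0; exact CharTwo.add_self_eq_zero _
    have hcomb : (Wp + X + Y + Ep) + Wp = (Wp + Wp) + (X + Y + Ep) := by abel
    rw [hcomb, hWW, zero_add]
  have hcancel2 : (Wp + X) + (Wp + Y) = X + Y := by
    have hWW : Wp + Wp = 0 := by
      funext c; show Wp c + Wp c = 0; exact CharTwo.add_self_eq_zero _
    have hcomb : (Wp + X) + (Wp + Y) = (Wp + Wp) + (X + Y) := by abel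
    rw [hcomb, hWW, zero_add]
  -- main case analysis
  by_cases hXY : X + Y = 0
  · -- g0 + h1 = Ep + (X+Y) = Ep; two odd quadrants give +2
    have hpair : (Wp + X + Y + Ep) + Wp = Ep := by
      rw [hcancel1, hXY]
      funext c
      show (0 : Cube m' → ZMod 2) c + Ep c = Ep c
      simp
    have hq := wtB_add_le (Wp + X + Y + Ep) Wp
    rw [hpair] at hq
    have hpow : 2 ^ (ℓ+1) = 2 ^ ℓ + 2 ^ ℓ := by ring
    omega
  · -- X + Y ≠ 0
    have hXYform : X + Y = rsum (symmDiff (CX.image (rm2 b' b₂)) (CY.image (rm2 b' b₂))) := by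
      rw [hXimg, hYimg, rsum_add]
    have hXYne : (symmDiff (CX.image (rm2 b' b₂)) (CY.image (rm2 b' b₂))).Nonempty := by
      rw [Finset.nonempty_iff_ne_empty]
      intro hcon
      rw [hXYform, hcon, rsum_empty] at hXY
      exact hXY rfl
    have hwXY : 2 ^ ℓ ≤ wtB (X + Y) := by
      rw [hXYform]
      apply S0 m' ℓ _ hXYne
      intro t' ht'
      have ht'' : t' ∈ CX.image (rm2 b' b₂) ∨ t' ∈ CY.image (rm2 b' b₂) := by
        have := Finset.mem_symmDiff.1 ht'
        tauto
      rcases ht'' with hm | hm <;> obtain ⟨t, ht, rfl⟩ := Finset.mem_image.1 hm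
      · exact hpcX t ht
      · exact hpcY t ht
    have hqXY := wtB_add_le (Wp + X) (Wp + Y)
    rw [hcancel2] at hqXY
    by_cases hXYE : X + Y + Ep = 0
    · -- then wt(X+Y) = wt Ep ≥ 2^{ℓ+1} - 2, plus two quadrants equal to Wp (odd)
      have hEpXY : X + Y = Ep := by
        have hcomb : X + Y + Ep + (X + Y) = Ep + ((X+Y) + (X+Y)) := by abel
        have hself : (X+Y) + (X+Y) = 0 := by
          funext c; show (X+Y) c + (X+Y) c = 0; exact CharTwo.add_self_eq_zero _
        have h9 : X + Y + Ep + (X + Y) = (0 : Cube m' → ZMod 2) + (X + Y) := by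
          rw [hXYE]
        rw [hcomb, hself, add_zero, zero_add] at h9
        exact h9.symm
      have hwEp : 2 ^ ℓ + 2 ^ ℓ ≤ wtB (X + Y) + 2 := by
        rw [hEpXY]; exact hEp_bound
      have hquadeq : Wp + X + Y + Ep = Wp := by
        have hcomb : Wp + X + Y + Ep = Wp + (X + Y + Ep) := by abel
        rw [hcomb, hXYE, add_zero]
      rw [hquadeq] at hwt
      have hoddW : 1 ≤ wtB Wp := by
        have h10 := hodd (∅ : Finset (Cube (m'+1+1))) 0 (by simp [rsum_empty]) (by simp)
        rw [add_zero] at h10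
        exact h10
      have hpow : 2 ^ (ℓ+1) = 2 ^ ℓ + 2 ^ ℓ := by ring
      omega
    · -- both pair-sums at least 2^ℓ
      have hXYEform : X + Y + Ep = rowB ihat + rowB jhat + rsum (symmDiff (symmDiff
          (CX.image (rm2 b' b₂)) (CY.image (rm2 b' b₂))) (CE.image (rm2 b' b₂))) := by
        rw [← rsum_add, ← hXYform, hEp, hEimg]
        abel
      -- convert rowB ihat + rowB jhat + rsum U to a single rsum; all pc ≥ ℓ
      have hXYEwt : 2 ^ ℓ ≤ wtB (X + Y + Ep) := by
        set U := symmDiff (symmDiff (CX.image (rm2 b' b₂)) (CY.image (rm2 b' b₂)))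
          (CE.image (rm2 b' b₂)) with hU
        have hUform : rowB ihat + rowB jhat + rsum U
            = rsum (symmDiff (symmDiff {ihat} {jhat}) U) := by
          have h1 : rowB ihat = rsum {ihat} := by
            unfold rsum; rw [Finset.sum_singleton]
          have h2 : rowB jhat = rsum {jhat} := by
            unfold rsum; rw [Finset.sum_singleton]
          rw [h1, h2, rsum_add, rsum_add]
        have hUne : (symmDiff (symmDiff {ihat} {jhat}) U).Nonempty := by
          rw [Finset.nonempty_iff_ne_empty]
          intro hcon
          have : X + Y + Ep = 0 := by
            rw [hXYEform, hUform, hcon, rsum_empty]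
          exact hXYE this
        rw [hXYEform, hUform]
        apply S0 m' ℓ _ hUne
        intro t' ht'
        have ht'' : t' ∈ ({ihat} : Finset (Cube m')) ∨ t' ∈ ({jhat} : Finset (Cube m'))
            ∨ t' ∈ U := by
          have h3 := Finset.mem_symmDiff.1 ht'
          rcases h3 with ⟨h4, _⟩ | ⟨h4, _⟩
          · have h5 := Finset.mem_symmDiff.1 h4
            tauto
          · tauto
        rcases ht'' with hm | hm | hm
        · rw [Finset.mem_singleton.1 hm, hpc_ihat]
        · rw [Finset.mem_singleton.1 hm, hpc_jhat]
        · rw [hU] at hm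
          have hm2 : t' ∈ symmDiff (CX.image (rm2 b' b₂)) (CY.image (rm2 b' b₂))
              ∨ t' ∈ CE.image (rm2 b' b₂) := by
            have := Finset.mem_symmDiff.1 hm
            tauto
          rcases hm2 with hm3 | hm3
          · have hm4 : t' ∈ CX.image (rm2 b' b₂) ∨ t' ∈ CY.image (rm2 b' b₂) := by
              have := Finset.mem_symmDiff.1 hm3
              tauto
            rcases hm4 with hm5 | hm5 <;> obtain ⟨t, ht, rfl⟩ := Finset.mem_image.1 hm5
            · exact hpcX t ht
            · exact hpcY t ht
          · obtain ⟨t, ht, rfl⟩ := Finset.mem_image.1 hm3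
            have := hpcE t ht
            omega
      have hq := wtB_add_le (Wp + X + Y + Ep) Wp
      rw [hcancel1] at hq
      have hpow : 2 ^ (ℓ+1) = 2 ^ ℓ + 2 ^ ℓ := by ring
      omega

end PolarAux

namespace PolarAux

/-! ### Nat-level lemmas -/

lemma and_eq_self_iff_testBit (c t : ℕ) :
    c &&& t = c ↔ ∀ i, c.testBit i = true → t.testBit i = true := by
  constructor
  · intro h i hci
    have h2 := congrArg (fun x => x.testBit i) h
    simp only [Nat.testBit_land, hci, Bool.true_and] at h2
    exact h2
  · intro h
    apply Nat.eq_of_testBit_eq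
    intro i
    rw [Nat.testBit_land]
    cases hc : c.testBit i
    · simp
    · simp [h i hc]

lemma testBit_div_pow (x n i : ℕ) : (x / 2 ^ n).testBit i = x.testBit (n + i) := by
  rw [← Nat.shiftRight_eq_div_pow, Nat.testBit_shiftRight]

lemma and_split_pow (n c t : ℕ) :
    c &&& t = c ↔ ((c / 2^n) &&& (t / 2^n) = c / 2^n) ∧ ((c % 2^n) &&& (t % 2^n) = c % 2^n) := by
  rw [and_eq_self_iff_testBit, and_eq_self_iff_testBit, and_eq_self_iff_testBit]
  constructor
  · intro h
    constructor
    · intro i hi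
      rw [testBit_div_pow] at hi ⊢
      exact h _ hi
    · intro i hi
      rw [Nat.testBit_mod_two_pow] at hi ⊢
      simp only [Bool.and_eq_true, decide_eq_true_eq] at hi ⊢
      exact ⟨hi.1, h _ hi.2⟩
  · rintro ⟨h1, h2⟩ i hi
    by_cases hin : i < n
    · have := h2 i (by rw [Nat.testBit_mod_two_pow]; simp [hin, hi])
      rw [Nat.testBit_mod_two_pow] at this
      simp only [Bool.and_eq_true, decide_eq_true_eq] at this
      exact this.2
    · push_neg at hin
      obtain ⟨i', rfl⟩ : ∃ i', i = n + i' := ⟨i - n, by omega⟩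
      have := h1 i' (by rw [testBit_div_pow]; exact hi)
      rw [testBit_div_pow] at this
      exact this

lemma kernel_formula (a b : Fin 2) :
    polarKernel a b = if (b : ℕ) &&& (a : ℕ) = (b : ℕ) then 1 else 0 := by
  fin_cases a <;> fin_cases b <;> simp [polarKernel] <;> rfl

/-- the pointwise formula for the rows of the polar matrix -/
lemma rowFormula : ∀ (n : ℕ) (t c : Fin (2^n)),
    row n t c = if (c : ℕ) &&& (t : ℕ) = (c : ℕ) then 1 else 0 := by
  intro n
  induction n with
  | zero =>
    intro t c
    have ht : (t : ℕ) = 0 := by have := t.isLt; simp only [pow_zero] at this; omega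
    have hc : (c : ℕ) = 0 := by have := c.isLt; simp only [pow_zero] at this; omega
    have htc : t = c := Fin.ext (by rw [ht, hc])
    show polarG 0 t c = _
    simp only [polarG]
    rw [htc, Matrix.one_apply_eq]
    norm_num
  | succ n IH =>
    intro t c
    show polarG (n+1) t c = _
    simp only [polarG]
    rw [Matrix.reindex_apply, Matrix.submatrix_apply, Matrix.reindex_apply,
      Matrix.submatrix_apply, finProdFinEquiv_symm_apply, finProdFinEquiv_symm_apply,
      Matrix.kroneckerMap_apply]
    have hdiv : ∀ x : Fin (2 ^ (n+1)),
        ((((finCongr (by ring : 2 * 2^n = 2^(n+1))).symm x).divNat : ℕ) = (x : ℕ) / 2^n)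
        ∧ ((((finCongr (by ring : 2 * 2^n = 2^(n+1))).symm x).modNat : ℕ) = (x : ℕ) % 2^n) := by
      intro x
      constructor <;> rfl
    show polarKernel _ _ * row n _ _ = _
    rw [IH, kernel_formula]
    rcases hdiv t with ⟨hdt, hmt⟩
    rcases hdiv c with ⟨hdc, hmc⟩
    rw [hdt, hmt, hdc, hmc]
    by_cases h1 : ((c : ℕ) / 2^n) &&& ((t : ℕ) / 2^n) = (c : ℕ) / 2^n
    · by_cases h2 : ((c : ℕ) % 2^n) &&& ((t : ℕ) % 2^n) = (c : ℕ) % 2^n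
      · rw [if_pos h1, if_pos h2, if_pos ((and_split_pow n (c:ℕ) (t:ℕ)).2 ⟨h1, h2⟩)]
        ring
      · rw [if_pos h1, if_neg h2, if_neg
          (fun hc => h2 ((and_split_pow n (c:ℕ) (t:ℕ)).1 hc).2)]
        ring
    · by_cases h2 : ((c : ℕ) % 2^n) &&& ((t : ℕ) % 2^n) = (c : ℕ) % 2^n
      · rw [if_neg h1, if_pos h2, if_neg
          (fun hc => h1 ((and_split_pow n (c:ℕ) (t:ℕ)).1 hc).1)]
        ring
      · rw [if_neg h1, if_neg h2, if_neg
          (fun hc => h1 ((and_split_pow n (c:ℕ) (t:ℕ)).1 hc).1)]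
        ring

end PolarAux

namespace PolarAux

lemma popcount_eq : ∀ (j : ℕ) (N : ℕ), j < 2 ^ N →
    popcount j = ((Finset.range N).filter (fun i => j.testBit i = true)).card := by
  intro j
  induction j using Nat.binaryRec with
  | zero =>
    intro N _
    unfold popcount
    rw [Nat.zero_bits]
    simp [Nat.zero_testBit]
  | bit b q IH =>
    intro N hlt
    by_cases hzero : Nat.bit b q = 0
    · rw [hzero]
      unfold popcount
      rw [Nat.zero_bits]
      simp [Nat.zero_testBit]
    · have hbits : (Nat.bit b q).bits = b :: q.bits := by
        apply Nat.bits_append_bit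
        intro hq
        subst hq
        cases b
        · exfalso; apply hzero; rfl
        · rfl
      have hbv := Nat.bit_val b q
      have htoNat : (b.toNat : ℕ) ≤ 1 := by cases b <;> simp
      rcases N with _ | M
      · exfalso
        simp only [pow_zero, Nat.lt_one_iff] at hlt
        exact hzero hlt
      have hq : q < 2 ^ M := by
        rw [hbv] at hlt
        rw [pow_succ] at hlt
        omega
      unfold popcount
      rw [hbits]
      have hcount : (b :: q.bits).count true = q.bits.count true + if b = true then 1 else 0 := by
        rw [List.count_cons]
        congr 1
        cases b <;> simp
      rw [hcount]
      have hIH := IH M hq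
      unfold popcount at hIH
      rw [hIH]
      rw [Finset.card_filter, Finset.card_filter, Finset.sum_range_succ']
      congr 1
      · apply Finset.sum_congr rfl
        intro i _
        rw [Nat.testBit_bit_succ]
      · rw [Nat.testBit_bit_zero]

/-- the bit-vector equivalence -/
def toB (n : ℕ) (t : Fin (2^n)) : Cube n := fun i => (t : ℕ).testBit (i : ℕ)

lemma toB_injective (n : ℕ) : Function.Injective (toB n) := by
  intro t s h
  apply Fin.ext
  apply Nat.eq_of_testBit_eq
  intro i
  by_cases hi : i < n
  · exact congrFun h ⟨i, hi⟩
  · push_neg at hi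
    have h1 : (t : ℕ) < 2 ^ i :=
      lt_of_lt_of_le t.isLt (Nat.pow_le_pow_right (by norm_num) hi)
    have h2 : (s : ℕ) < 2 ^ i :=
      lt_of_lt_of_le s.isLt (Nat.pow_le_pow_right (by norm_num) hi)
    rw [Nat.testBit_eq_false_of_lt h1, Nat.testBit_eq_false_of_lt h2]

lemma toB_bijective (n : ℕ) : Function.Bijective (toB n) := by
  rw [Fintype.bijective_iff_injective_and_card]
  refine ⟨toB_injective n, ?_⟩
  rw [Fintype.card_fin, Fintype.card_fun]
  simp

noncomputable def EB (n : ℕ) : Fin (2^n) ≃ Cube n := Equiv.ofBijective _ (toB_bijective n)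

lemma EB_apply (n : ℕ) (t : Fin (2^n)) : EB n t = toB n t := rfl

lemma popcount_toB (n : ℕ) (t : Fin (2^n)) : popcount (t : ℕ) = pcB (toB n t) := by
  rw [popcount_eq (t : ℕ) n t.isLt]
  unfold pcB toB
  apply Finset.card_bij (fun (a : ℕ) (ha : a ∈ (Finset.range n).filter
    (fun i => (t:ℕ).testBit i = true)) => (⟨a, by
      have := Finset.mem_filter.1 ha
      exact Finset.mem_range.1 this.1⟩ : Fin n))
  · intro a ha
    simp only [mem_filter, mem_univ, true_and]
    exact (Finset.mem_filter.1 ha).2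
  · intro a ha b hb hab
    have := congrArg (fun x : Fin n => (x : ℕ)) hab
    simpa using this
  · intro b hb
    refine ⟨(b : ℕ), Finset.mem_filter.2 ⟨Finset.mem_range.2 b.isLt, ?_⟩, ?_⟩
    · exact (Finset.mem_filter.1 hb).2
    · simp
  
lemma subm_toB (n : ℕ) (c t : Fin (2^n)) :
    subm (toB n c) (toB n t) ↔ (c : ℕ) &&& (t : ℕ) = (c : ℕ) := by
  rw [and_eq_self_iff_testBit]
  constructor
  · intro h i hci
    by_cases hi : i < n
    · exact h ⟨i, hi⟩ hci
    · exfalso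
      push_neg at hi
      have h1 : (c : ℕ) < 2 ^ i :=
        lt_of_lt_of_le c.isLt (Nat.pow_le_pow_right (by norm_num) hi)
      rw [Nat.testBit_eq_false_of_lt h1] at hci
      exact Bool.noConfusion hci
  · intro h i hci
    exact h (i : ℕ) hci

lemma rowB_toB (n : ℕ) (t : Fin (2^n)) (c : Cube n) :
    rowB (toB n t) c = row n t ((EB n).symm c) := by
  have hc : toB n ((EB n).symm c) = c := (EB n).apply_symm_apply c
  rw [rowFormula]
  unfold rowB
  by_cases h : subm c (toB n t)
  · rw [if_pos h, if_pos]
    rw [← hc] at h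
    exact (subm_toB n _ t).1 h
  · rw [if_neg h, if_neg]
    intro hcon
    apply h
    rw [← hc]
    exact (subm_toB n _ t).2 hcon

lemma minf_toB (n : ℕ) (a b : Fin (2^n)) (h : (a : ℕ) &&& (b : ℕ) = 0) :
    pcB (minf (toB n a) (toB n b)) = 0 := by
  rw [pcB_minf_eq_zero_iff]
  intro i hcon
  have h1 := congrArg (fun x => x.testBit (i : ℕ)) h
  simp only [Nat.testBit_land, Nat.zero_testBit] at h1
  unfold toB at hcon
  rw [hcon.1, hcon.2] at h1
  simp at h1

lemma hammingWeight_eq_wtB (n : ℕ) (f : Fin (2^n) → ZMod 2) :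
    hammingWeight f = wtB (fun c => f ((EB n).symm c)) := by
  unfold hammingWeight wtB
  apply Finset.card_bij (fun t _ => EB n t)
  · intro t ht
    simp only [mem_filter, mem_univ, true_and] at ht ⊢
    rw [(EB n).symm_apply_apply]
    exact ht
  · intro a _ b _ hab
    exact (EB n).injective hab
  · intro c hc
    refine ⟨(EB n).symm c, ?_, by simp⟩
    simp only [mem_filter, mem_univ, true_and] at hc ⊢
    exact hc

end PolarAux

namespace PolarAux

lemma sum_symmDiff_char2 {α : Type*} [DecidableEq α] {M : Type*} [AddCommGroup M]
    (hM : ∀ x : M, x + x = 0) (g : α → M) (A B : Finset α) :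
    (∑ a ∈ A, g a) + (∑ a ∈ B, g a) = ∑ a ∈ symmDiff A B, g a := by
  have h1 : ∑ a ∈ A, g a + ∑ a ∈ B, g a
      = ∑ a ∈ A ∪ B, g a + ∑ a ∈ A ∩ B, g a := (Finset.sum_union_inter).symm
  have h2 : A ∪ B = (symmDiff A B) ∪ (A ∩ B) := by
    ext x
    simp only [Finset.mem_union, Finset.mem_inter, Finset.mem_symmDiff]
    tauto
  have h3 : Disjoint (symmDiff A B) (A ∩ B) := by
    rw [Finset.disjoint_left]
    intro x hx hx2
    simp only [Finset.mem_symmDiff, Finset.mem_inter] at hx hx2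
    tauto
  rw [h1, h2, Finset.sum_union h3, add_assoc, hM, add_zero]

section Assembly

variable (n ℓ : ℕ) (i j k : Fin (2^n))

/-- canonical representation predicate for elements of the extended code. -/
def rep (v : Fin (2^n) → ZMod 2) : Prop :=
  ∃ (ε : Bool) (S : Finset (Fin (2^n))), (∀ t ∈ S, ℓ + 1 ≤ popcount (t : ℕ)) ∧
    v = (cond ε (row n i + row n j + row n k) 0) + ∑ t ∈ S, row n t

lemma rep_span (v : Fin (2^n) → ZMod 2)
    (hv : v ∈ Submodule.span (ZMod 2)
      ({v | ∃ t : Fin (2 ^ n), ℓ + 1 ≤ popcount (t : ℕ) ∧ v = row n t} ∪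
        {row n i + row n j + row n k})) : rep n ℓ i j k v := by
  classical
  have hself : ∀ x : Fin (2^n) → ZMod 2, x + x = 0 := by
    intro x; funext c; show x c + x c = 0; exact CharTwo.add_self_eq_zero _
  let M : Submodule (ZMod 2) (Fin (2^n) → ZMod 2) :=
    { carrier := {v | rep n ℓ i j k v}
      zero_mem' := ⟨false, ∅, by simp, by simp⟩
      add_mem' := by
        rintro a b ⟨ε₁, S₁, hS₁, rfl⟩ ⟨ε₂, S₂, hS₂, rfl⟩
        refine ⟨xor ε₁ ε₂, symmDiff S₁ S₂, ?_, ?_⟩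
        · intro t ht
          have : t ∈ S₁ ∨ t ∈ S₂ := by
            have := Finset.mem_symmDiff.1 ht
            tauto
          rcases this with h | h
          · exact hS₁ t h
          · exact hS₂ t h
        · rw [← sum_symmDiff_char2 hself (fun t => row n t) S₁ S₂]
          have hmm := hself (row n i + row n j + row n k)
          cases ε₁ <;> cases ε₂ <;>
            simp only [Bool.xor_false, Bool.xor_true, Bool.false_xor, Bool.true_xor,
              Bool.not_true, Bool.not_false, cond_true, cond_false]
          · abel
          · abel
          · abel
          · rw [show (row n i + row n j + row n k) + ∑ t ∈ S₁, row n t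
                + ((row n i + row n j + row n k) + ∑ t ∈ S₂, row n t)
                = ((row n i + row n j + row n k) + (row n i + row n j + row n k))
                  + (∑ t ∈ S₁, row n t + ∑ t ∈ S₂, row n t) from by abel, hmm, zero_add]
      smul_mem' := by
        intro c x hx
        have hc : c = 0 ∨ c = 1 := by
          rcases c with ⟨cv, hcv⟩
          interval_cases cv
          · left; rfl
          · right; rfl
        rcases hc with rfl | rfl
        · show rep n ℓ i j k ((0 : ZMod 2) • x)
          rw [zero_smul]
          exact ⟨false, ∅, by simp, by simp⟩
        · show rep n ℓ i j k ((1 : ZMod 2) • x)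
          rw [one_smul]
          exact hx }
  have hle : Submodule.span (ZMod 2)
      ({v | ∃ t : Fin (2 ^ n), ℓ + 1 ≤ popcount (t : ℕ) ∧ v = row n t} ∪
        {row n i + row n j + row n k}) ≤ M := by
    rw [Submodule.span_le]
    rintro v (⟨t, hpc, rfl⟩ | hv)
    · exact ⟨false, {t}, by simpa using hpc, by simp⟩
    · rw [Set.mem_singleton_iff] at hv
      subst hv
      exact ⟨true, ∅, by simp, by simp⟩
  exact hle hv

end Assembly

end PolarAux

namespace PolarAux

lemma trans_sum (n : ℕ) (S : Finset (Fin (2^n))) :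
    (fun cc => (∑ t ∈ S, row n t) ((EB n).symm cc)) = rsum (S.image (toB n)) := by
  funext cc
  rw [Finset.sum_apply]
  unfold rsum
  rw [Finset.sum_image (fun a _ b _ h => toB_injective n h), Finset.sum_apply]
  apply Finset.sum_congr rfl
  intro t _
  rw [rowB_toB]

lemma trans_row (n : ℕ) (t : Fin (2^n)) :
    (fun cc => (row n t) ((EB n).symm cc)) = rowB (toB n t) := by
  funext cc
  rw [rowB_toB]

end PolarAux

open PolarAux

theorem min_distance_extended_code_disjoint_triple' (n ℓ : ℕ) (hℓ : 2 ≤ ℓ)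
    (i j k : Fin (2 ^ n))
    (hi : popcount (i : ℕ) = ℓ) (hj : popcount (j : ℕ) = ℓ) (hk : popcount (k : ℕ) = 2)
    (hij : (i : ℕ) &&& (j : ℕ) = 0) (hik : (i : ℕ) &&& (k : ℕ) = 0)
    (hjk : (j : ℕ) &&& (k : ℕ) = 0) :
    (∀ c ∈ Submodule.span (ZMod 2)
        ({v | ∃ t : Fin (2 ^ n), ℓ + 1 ≤ popcount (t : ℕ) ∧ v = row n t} ∪
          {row n i + row n j + row n k}),
      c ≠ 0 → 2 ^ (ℓ + 1) ≤ hammingWeight c) ∧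
    (∃ c ∈ Submodule.span (ZMod 2)
        ({v | ∃ t : Fin (2 ^ n), ℓ + 1 ≤ popcount (t : ℕ) ∧ v = row n t} ∪
          {row n i + row n j + row n k}),
      hammingWeight c = 2 ^ (ℓ + 1)) := by
  classical
  have hpcS : ∀ (S : Finset (Fin (2^n))), (∀ t ∈ S, ℓ + 1 ≤ popcount (t:ℕ)) →
      ∀ u ∈ S.image (toB n), ℓ + 1 ≤ pcB u := by
    intro S hS u hu
    obtain ⟨t, ht, rfl⟩ := Finset.mem_image.1 hu
    rw [← popcount_toB]
    exact hS t ht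
  constructor
  · -- lower bound
    intro c hc hc0
    obtain ⟨ε, S, hS, rfl⟩ := PolarAux.rep_span n ℓ i j k c hc
    rcases ε with _ | _
    · -- pure RM part
      simp only [cond_false, zero_add] at hc0 ⊢
      have hSne : S.Nonempty := by
        rw [Finset.nonempty_iff_ne_empty]
        rintro rfl
        simp at hc0
      rw [hammingWeight_eq_wtB, trans_sum]
      exact S0 n (ℓ+1) (S.image (toB n)) (hSne.image _) (hpcS S hS)
    · -- contains the merged row
      simp only [cond_true] at hc0 ⊢
      rw [hammingWeight_eq_wtB]
      have hfun : (fun cc => (row n i + row n j + row n k + ∑ t ∈ S, row n t)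
          ((EB n).symm cc))
          = rowB (toB n i) + rowB (toB n j) + rowB (toB n k) + rsum (S.image (toB n)) := by
        funext cc
        show row n i _ + row n j _ + row n k _ + (∑ t ∈ S, row n t) _ = _
        rw [← rowB_toB, ← rowB_toB, ← rowB_toB]
        have := congrFun (trans_sum n S) cc
        rw [this]
        rfl
      rw [hfun]
      apply TL ℓ hℓ n (toB n i) (toB n j) (toB n k) (S.image (toB n))
        (by rw [← popcount_toB]; exact hi) (by rw [← popcount_toB]; exact hj)
        (by rw [← popcount_toB]; exact hk)
        (minf_toB n i j hij) (minf_toB n i k hik) (minf_toB n j k hjk)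
        (hpcS S hS)
  · -- existence : row of popcount ℓ+1
    have hk1 : 1 ≤ pcB (toB n k) := by rw [← popcount_toB, hk]; omega
    obtain ⟨bi, hbi⟩ := exists_bit hk1
    set mask : Cube n := fun b => toB n i b || decide (b = bi) with hmask
    have hibi : toB n i bi = false := disj_bits' (minf_toB n i k hik) hbi
    have hpcmask : pcB mask = ℓ + 1 := by
      unfold pcB
      have hset : univ.filter (fun b => mask b = true)
          = univ.filter (fun b => toB n i b = true) ∪ {bi} := by
        ext b
        simp only [mem_filter, mem_univ, true_and, mem_union, mem_singleton, hmask,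
          Bool.or_eq_true, decide_eq_true_eq]
      rw [hset, Finset.card_union_of_disjoint]
      · have : (univ.filter (fun b => toB n i b = true)).card = ℓ := by
          have := popcount_toB n i
          rw [hi] at this
          exact this.symm
        rw [this]
        simp
      · rw [Finset.disjoint_singleton_right]
        intro hcon
        have := (Finset.mem_filter.1 hcon).2
        rw [hibi] at this
        exact Bool.noConfusion this
    set t0 : Fin (2^n) := (EB n).symm mask with ht0
    have htoB : toB n t0 = mask := by
      have := (EB n).apply_symm_apply mask
      rw [ht0]
      exact this
    have hpct0 : popcount (t0 : ℕ) = ℓ + 1 := by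
      rw [popcount_toB, htoB, hpcmask]
    refine ⟨row n t0, ?_, ?_⟩
    · apply Submodule.subset_span
      left
      exact ⟨t0, by omega, rfl⟩
    · rw [hammingWeight_eq_wtB, trans_row, wtB_rowB, htoB, hpcmask]


/-- the polar-like code spanned by the rows of popcount at least `ℓ+1`
together with the merged row `g_i + g_j + g_k` (disjoint-support triple) has minimum
Hamming weight exactly `2^(ℓ+1)`. -/
theorem min_distance_extended_code_disjoint_triple (n ℓ : ℕ) (hℓ : 2 ≤ ℓ)
    (i j k : Fin (2 ^ n))
    (hi : popcount (i : ℕ) = ℓ) (hj : popcount (j : ℕ) = ℓ) (hk : popcount (k : ℕ) = 2)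
    (hij : (i : ℕ) &&& (j : ℕ) = 0) (hik : (i : ℕ) &&& (k : ℕ) = 0)
    (hjk : (j : ℕ) &&& (k : ℕ) = 0) :
    (∀ c ∈ Submodule.span (ZMod 2)
        ({v | ∃ t : Fin (2 ^ n), ℓ + 1 ≤ popcount (t : ℕ) ∧ v = row n t} ∪
          {row n i + row n j + row n k}),
      c ≠ 0 → 2 ^ (ℓ + 1) ≤ hammingWeight c) ∧
    (∃ c ∈ Submodule.span (ZMod 2)
        ({v | ∃ t : Fin (2 ^ n), ℓ + 1 ≤ popcount (t : ℕ) ∧ v = row n t} ∪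
          {row n i + row n j + row n k}),
      hammingWeight c = 2 ^ (ℓ + 1)) := min_distance_extended_code_disjoint_triple'
    n ℓ hℓ i j k hi hj hk hij hik hjk
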